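/- arXiv:2108.01990 — 7 statements merged into one kernel-verified Lean document; each statement's English description precedes it below -/
import Mathlib

section
/- The number of Lyndon words of length n over an alphabet of size q equals (1/n) · ∑_{d | n} μ(n/d) · q^d, where μ is the Möbius function. -/
/-- Rotation equivalence on words of length `n` over an alphabet of size `q`. -/
def rotSetoid (n q : ℕ) : Setoid (ZMod n → Fin q) where
  r u v := ∃ s : ZMod n, (fun i => u (i + s)) = v
  iseqv := by
    refine ⟨fun u => ⟨0, by funext i; rw [add_zero]⟩, ?_, ?_⟩
    · rintro u v ⟨s, rfl⟩
      exact ⟨-s, by funext i; simp⟩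
    · rintro u v w ⟨s, rfl⟩ ⟨t, rfl⟩
      exact ⟨t + s, by funext i; show u (i + (t + s)) = u (i + t + s); rw [add_assoc]⟩

/-- A word `w` of length `n` is aperiodic if it is not the tiling (power) of a
word of a strictly shorter length `d` with `d ∣ n`. -/
def Aperiodic1D (n q : ℕ) (w : ZMod n → Fin q) : Prop :=
  ∀ d : ℕ, d ∣ n → d < n → ¬ ∀ i : ZMod n, w (i + (d : ZMod n)) = w i

/-- `lyndonCount n q` is the number of aperiodic necklaces (Lyndon words) of
length `n` over an alphabet of size `q`, i.e. rotation classes of aperiodic words. -/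
noncomputable def lyndonCount (n q : ℕ) : ℕ :=
  Nat.card {c : Quotient (rotSetoid n q) //
    ∃ w : ZMod n → Fin q, Quotient.mk (rotSetoid n q) w = c ∧ Aperiodic1D n q w}


namespace LyndonAux

variable {n q : ℕ}

/-- The subgroup of periods of a word. -/
def periods (u : ZMod n → Fin q) : AddSubgroup (ZMod n) where
  carrier := {s | ∀ i, u (i + s) = u i}
  zero_mem' := fun i => by rw [add_zero]
  add_mem' := by
    intro a b ha hb i
    rw [← add_assoc, hb, ha]
  neg_mem' := by
    intro a ha i
    have := ha (i + -a)
    rw [neg_add_cancel_right] at this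
    exact this.symm

lemma mem_periods {u : ZMod n → Fin q} {s : ZMod n} :
    s ∈ periods u ↔ ∀ i, u (i + s) = u i := Iff.rfl

lemma gcd_mem_periods {u : ZMod n → Fin q} {a b : ℕ}
    (ha : (a : ZMod n) ∈ periods u) (hb : (b : ZMod n) ∈ periods u) :
    ((Nat.gcd a b : ℕ) : ZMod n) ∈ periods u := by
  have h : ((Nat.gcd a b : ℕ) : ZMod n) =
      (Nat.gcdA a b) • (a : ZMod n) + (Nat.gcdB a b) • (b : ZMod n) := by
    have := Nat.gcd_eq_gcd_ab a b
    have h2 : (((Nat.gcd a b : ℕ) : ℤ) : ZMod n) =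
        ((a * Nat.gcdA a b + b * Nat.gcdB a b : ℤ) : ZMod n) := by rw [← this]
    push_cast at h2 ⊢
    rw [h2, zsmul_eq_mul, zsmul_eq_mul]; ring
  rw [h]
  exact AddSubgroup.add_mem _ (AddSubgroup.zsmul_mem _ ha _) (AddSubgroup.zsmul_mem _ hb _)

lemma natCast_self_mem_periods (u : ZMod n → Fin q) : ((n : ℕ) : ZMod n) ∈ periods u := by
  rw [ZMod.natCast_self]; exact (periods u).zero_mem

/-- The minimal positive (natural) period of a word. -/
noncomputable def minP (u : ZMod n → Fin q) : ℕ :=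
  sInf {k : ℕ | 0 < k ∧ (k : ZMod n) ∈ periods u}

set_option linter.unusedSectionVars false
set_option linter.unusedVariables false
variable [NeZero n]

lemma minP_spec (u : ZMod n → Fin q) :
    0 < minP u ∧ ((minP u : ℕ) : ZMod n) ∈ periods u :=
  Nat.sInf_mem (⟨n, Nat.pos_of_ne_zero (NeZero.ne n), natCast_self_mem_periods u⟩ :
    {k : ℕ | 0 < k ∧ (k : ZMod n) ∈ periods u}.Nonempty)

lemma minP_le {u : ZMod n → Fin q} {k : ℕ} (hk : 0 < k) (h : (k : ZMod n) ∈ periods u) :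
    minP u ≤ k := Nat.sInf_le ⟨hk, h⟩

lemma minP_dvd_of_mem {u : ZMod n → Fin q} {k : ℕ} (hk : 0 < k)
    (h : (k : ZMod n) ∈ periods u) : minP u ∣ k := by
  have hg : ((Nat.gcd (minP u) k : ℕ) : ZMod n) ∈ periods u :=
    gcd_mem_periods (minP_spec u).2 h
  have hgpos : 0 < Nat.gcd (minP u) k := Nat.gcd_pos_of_pos_left _ (minP_spec u).1
  have h1 : minP u ≤ Nat.gcd (minP u) k := minP_le hgpos hg
  have h2 : Nat.gcd (minP u) k ≤ minP u := Nat.gcd_le_left _ (minP_spec u).1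
  have : Nat.gcd (minP u) k = minP u := le_antisymm h2 h1
  rw [← this]; exact Nat.gcd_dvd_right _ _

lemma minP_dvd (u : ZMod n → Fin q) : minP u ∣ n :=
  minP_dvd_of_mem (Nat.pos_of_ne_zero (NeZero.ne n)) (natCast_self_mem_periods u)


section Cmap

variable (d : ℕ) (hd : d ∣ n)
include hd

omit hd in
/-- Reduction map `ZMod n → ZMod d`. -/
def cmap (i : ZMod n) : ZMod d := (i.val : ZMod d)

lemma cmap_add_natCast (i : ZMod n) (e : ℕ) :
    cmap d (i + (e : ZMod n)) = cmap d i + (e : ZMod d) := by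
  have h1 : (i + (e : ZMod n)).val ≡ i.val + e [MOD d] := by
    apply Nat.ModEq.of_dvd hd
    calc (i + (e : ZMod n)).val ≡ i.val + ((e : ZMod n)).val [MOD n] := by
          rw [ZMod.val_add]; exact (Nat.mod_modEq _ _)
      _ ≡ i.val + e [MOD n] := by
          exact Nat.ModEq.add_left _ (by rw [ZMod.val_natCast]; exact (Nat.mod_modEq _ _))
  unfold cmap
  rw [show ((i.val : ZMod d) + (e : ZMod d) = ((i.val + e : ℕ) : ZMod d)) by push_cast; ring]
  rw [ZMod.natCast_eq_natCast_iff]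
  exact h1

lemma cmap_natCast (e : ℕ) : cmap d ((e : ZMod n)) = (e : ZMod d) := by
  have := cmap_add_natCast (n := n) d hd 0 e
  rw [zero_add] at this
  rw [this]
  unfold cmap
  rw [ZMod.val_zero, Nat.cast_zero, zero_add]

lemma cmap_section [NeZero d] (j : ZMod d) : cmap d ((j.val : ZMod n)) = j := by
  rw [cmap_natCast d hd]
  exact ZMod.natCast_rightInverse j

omit hd in
/-- Words `ZMod n → Fin q` determined by their residue mod a period `d`. -/
lemma congr_of_cmap_eq {u : ZMod n → Fin q} (hper : (d : ZMod n) ∈ periods u)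
    {i j : ZMod n} (hij : cmap d i = cmap d j) : u i = u j := by
  unfold cmap at hij
  rw [ZMod.natCast_eq_natCast_iff] at hij
  -- reduce to the nat statement
  have key : ∀ a b : ℕ, a ≡ b [MOD d] → b ≤ a → u ((a : ZMod n)) = u ((b : ZMod n)) := by
    intro a b hab hba
    obtain ⟨m, hm⟩ : d ∣ a - b := (Nat.modEq_iff_dvd' hba).mp hab.symm
    have ha : a = b + d * m := by omega
    have hmem : ((d * m : ℕ) : ZMod n) ∈ periods u := by
      rw [show ((d * m : ℕ) : ZMod n) = m • ((d : ℕ) : ZMod n) by push_cast; ring]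
      exact AddSubgroup.nsmul_mem _ hper m
    rw [ha, Nat.cast_add]
    exact hmem ((b : ZMod n))
  have hval : ∀ i : ZMod n, u ((i.val : ZMod n)) = u i := fun i => by
    rw [ZMod.natCast_rightInverse i]
  rcases le_total j.val i.val with h | h
  · rw [← hval i, ← hval j]; exact key _ _ hij h
  · rw [← hval i, ← hval j]; exact (key _ _ hij.symm h).symm

omit hd in
/-- Lift a word of length `d` to a word of length `n` (tiling). -/
def liftW (w : ZMod d → Fin q) : ZMod n → Fin q := fun i => w (cmap d i)

omit hd in
/-- Restrict a word of length `n` to one of length `d`. -/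
def descendW (u : ZMod n → Fin q) : ZMod d → Fin q := fun j => u ((j.val : ZMod n))

lemma liftW_descendW [NeZero d] {u : ZMod n → Fin q} (hper : (d : ZMod n) ∈ periods u) :
    liftW d (descendW d u) = u := by
  funext i
  show u (((cmap d i).val : ZMod n)) = u i
  exact congr_of_cmap_eq d hper (cmap_section d hd _)

lemma descendW_liftW [NeZero d] (w : ZMod d → Fin q) :
    descendW (n := n) d (liftW (n := n) d w) = w := by
  funext j
  show w (cmap d ((j.val : ZMod n))) = w j
  rw [cmap_section d hd]

lemma period_liftW_up {w : ZMod d → Fin q} {e : ℕ} (he : (e : ZMod d) ∈ periods w) :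
    (e : ZMod n) ∈ periods (liftW (n := n) d w) := by
  intro i
  show w (cmap d (i + (e : ZMod n))) = w (cmap d i)
  rw [cmap_add_natCast d hd]
  exact he (cmap d i)

lemma natCast_mem_periods_liftW (w : ZMod d → Fin q) :
    (d : ZMod n) ∈ periods (liftW (n := n) d w) := by
  have : ((d : ℕ) : ZMod d) ∈ periods w := by rw [ZMod.natCast_self]; exact (periods w).zero_mem
  exact period_liftW_up d hd this

lemma period_descendW_down [NeZero d] {u : ZMod n → Fin q} {e : ℕ}
    (hper : (d : ZMod n) ∈ periods u) (he : (e : ZMod n) ∈ periods u) :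
    (e : ZMod d) ∈ periods (descendW d u) := by
  intro j
  show u (((j + (e : ZMod d)).val : ZMod n)) = u ((j.val : ZMod n))
  have step1 : u (((j + (e : ZMod d)).val : ZMod n)) = u ((j.val : ZMod n) + (e : ZMod n)) := by
    apply congr_of_cmap_eq d hper
    rw [cmap_section d hd, cmap_add_natCast d hd, cmap_section d hd]
  rw [step1]
  exact he ((j.val : ZMod n))

end Cmap


section Counting

lemma minP_liftW {d : ℕ} (hd : d ∣ n) [NeZero d] {w : ZMod d → Fin q}
    (hw : Aperiodic1D d q w) : minP (liftW (n := n) d w) = d := by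
  have hdpos : 0 < d := Nat.pos_of_ne_zero (NeZero.ne d)
  have hdper := natCast_mem_periods_liftW d hd w
  have hle : minP (liftW (n := n) d w) ≤ d := minP_le hdpos hdper
  have hedvd : minP (liftW (n := n) d w) ∣ d := minP_dvd_of_mem hdpos hdper
  have hew : ((minP (liftW (n := n) d w) : ℕ) : ZMod d) ∈ periods w := by
    have h1 := period_descendW_down d hd hdper (minP_spec (liftW (n := n) d w)).2
    rwa [descendW_liftW d hd] at h1
  by_contra hne
  exact hw _ hedvd (lt_of_le_of_ne hle hne) hew

lemma aperiodic_descendW {u : ZMod n → Fin q} {d : ℕ} (hd : d ∣ n) (hmin : minP u = d) :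
    Aperiodic1D d q (descendW (n := n) d u) := by
  haveI : NeZero d := ⟨(hmin ▸ (minP_spec u).1).ne'⟩
  intro e hed helt hper
  have hdper : ((d : ℕ) : ZMod n) ∈ periods u := hmin ▸ (minP_spec u).2
  have hup : ((e : ℕ) : ZMod n) ∈ periods u := by
    have h1 : ((e : ℕ) : ZMod n) ∈ periods (liftW (n := n) d (descendW (n := n) d u)) :=
      period_liftW_up d hd hper
    rwa [liftW_descendW d hd hdper] at h1
  have hepos : 0 < e := Nat.pos_of_dvd_of_pos hed (Nat.pos_of_ne_zero (NeZero.ne d))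
  have h2 := minP_le hepos hup
  omega

lemma aperiodic_iff_minP {u : ZMod n → Fin q} : Aperiodic1D n q u ↔ minP u = n := by
  have hnpos : 0 < n := Nat.pos_of_ne_zero (NeZero.ne n)
  constructor
  · intro h
    have h1 : minP u ∣ n := minP_dvd u
    have h2 : minP u ≤ n := Nat.le_of_dvd hnpos h1
    by_contra hne
    exact h (minP u) h1 (lt_of_le_of_ne h2 hne) (minP_spec u).2
  · intro h d hdvd hlt hper
    have hdpos : 0 < d := Nat.pos_of_dvd_of_pos hdvd hnpos
    have h2 := minP_le hdpos hper
    omega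

end Counting

/-- The number of aperiodic words of length `m`. -/
noncomputable def aCount (m q : ℕ) : ℕ := Nat.card {w : ZMod m → Fin q // Aperiodic1D m q w}

lemma sum_aCount (q : ℕ) : ∀ n, 0 < n → ∑ d ∈ n.divisors, (aCount d q : ℤ) = (q : ℤ) ^ n := by
  intro n hn
  haveI : NeZero n := ⟨hn.ne'⟩
  classical
  have htot : (Finset.univ : Finset (ZMod n → Fin q)).card = q ^ n := by
    rw [Finset.card_univ, Fintype.card_fun, ZMod.card, Fintype.card_fin]
  have hmem : ∀ u : ZMod n → Fin q, u ∈ (Finset.univ : Finset (ZMod n → Fin q)) →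
      minP u ∈ n.divisors := fun u _ => Nat.mem_divisors.mpr ⟨minP_dvd u, hn.ne'⟩
  have hfib := Finset.card_eq_sum_card_fiberwise hmem
  have hcard : ∀ d ∈ n.divisors,
      (Finset.univ.filter fun u : ZMod n → Fin q => minP u = d).card = aCount d q := by
    intro d hdmem
    obtain ⟨hd, -⟩ := Nat.mem_divisors.mp hdmem
    haveI : NeZero d := ⟨(Nat.pos_of_dvd_of_pos hd hn).ne'⟩
    have e : {u : ZMod n → Fin q // minP u = d} ≃ {w : ZMod d → Fin q // Aperiodic1D d q w} :=
      { toFun := fun p => ⟨descendW (n := n) d p.1, aperiodic_descendW hd p.2⟩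
        invFun := fun p => ⟨liftW (n := n) d p.1, minP_liftW hd p.2⟩
        left_inv := fun p => Subtype.ext (liftW_descendW d hd (p.2 ▸ (minP_spec p.1).2))
        right_inv := fun p => Subtype.ext (descendW_liftW d hd p.1) }
    calc (Finset.univ.filter fun u : ZMod n → Fin q => minP u = d).card
        = Fintype.card {u : ZMod n → Fin q // minP u = d} := (Fintype.card_subtype _).symm
      _ = Nat.card {u : ZMod n → Fin q // minP u = d} := Nat.card_eq_fintype_card.symm
      _ = Nat.card {w : ZMod d → Fin q // Aperiodic1D d q w} := Nat.card_congr e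
      _ = aCount d q := rfl
  rw [htot, Finset.sum_congr rfl hcard] at hfib
  exact_mod_cast hfib.symm

section Orbits

lemma periods_rot {u : ZMod n → Fin q} {s t : ZMod n} :
    t ∈ periods (fun i => u (i + s)) ↔ t ∈ periods u := by
  constructor
  · intro h i
    have h1 := h (i - s)
    have e1 : i - s + t + s = i + t := by ring
    have e2 : i - s + s = i := by ring
    dsimp only at h1
    rwa [e1, e2] at h1
  · intro h i
    have e1 : i + t + s = i + s + t := by ring
    dsimp only
    rw [e1]
    exact h (i + s)

lemma aperiodic_rot {u : ZMod n → Fin q} (hu : Aperiodic1D n q u) (s : ZMod n) :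
    Aperiodic1D n q (fun i => u (i + s)) := by
  intro d hdvd hlt hper
  exact hu d hdvd hlt (periods_rot.mp hper)

lemma rot_inj {u : ZMod n → Fin q} (hu : Aperiodic1D n q u) {s t : ZMod n}
    (h : (fun i => u (i + s)) = (fun i => u (i + t))) : s = t := by
  have hnpos : 0 < n := Nat.pos_of_ne_zero (NeZero.ne n)
  have hper : (s - t) ∈ periods u := by
    intro i
    have h1 := congrFun h (i - t)
    have e1 : i - t + t = i := by ring
    have e2 : i - t + s = i + (s - t) := by ring
    rwa [e1, e2] at h1
  by_contra hne
  have hst : s - t ≠ 0 := sub_ne_zero.mpr hne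
  set k := (s - t).val with hk
  have hkcast : ((k : ℕ) : ZMod n) = s - t := ZMod.natCast_rightInverse _
  have hkpos : 0 < k := by
    rcases Nat.eq_zero_or_pos k with h0 | h0
    · exact absurd (by rw [← hkcast, h0, Nat.cast_zero]) hst
    · exact h0
  have hklt : k < n := ZMod.val_lt _
  have hgper : ((Nat.gcd k n : ℕ) : ZMod n) ∈ periods u :=
    gcd_mem_periods (by rw [hkcast]; exact hper) (natCast_self_mem_periods u)
  have hgpos : 0 < Nat.gcd k n := Nat.gcd_pos_of_pos_left _ hkpos
  have hglt : Nat.gcd k n < n := lt_of_le_of_lt (Nat.gcd_le_left _ hkpos) hklt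
  exact hu _ (Nat.gcd_dvd_right _ _) hglt hgper

lemma out_aperiodic
    (c : {c : Quotient (rotSetoid n q) //
      ∃ w : ZMod n → Fin q, Quotient.mk (rotSetoid n q) w = c ∧ Aperiodic1D n q w}) :
    Aperiodic1D n q c.1.out := by
  obtain ⟨w, hw, hap⟩ := c.2
  have h1 : Quotient.mk (rotSetoid n q) w = Quotient.mk (rotSetoid n q) c.1.out := by
    rw [hw, Quotient.out_eq]
  obtain ⟨s, hs⟩ := Quotient.exact h1
  rw [← hs]
  exact aperiodic_rot hap s

lemma aCount_eq (hn : 0 < n) : aCount n q = n * lyndonCount n q := by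
  classical
  let T := {c : Quotient (rotSetoid n q) //
      ∃ w : ZMod n → Fin q, Quotient.mk (rotSetoid n q) w = c ∧ Aperiodic1D n q w}
  let F : T × ZMod n → {w : ZMod n → Fin q // Aperiodic1D n q w} :=
    fun p => ⟨fun i => p.1.1.out (i + p.2), aperiodic_rot (out_aperiodic p.1) p.2⟩
  have hF : Function.Bijective F := by
    constructor
    · rintro ⟨c, s⟩ ⟨c', s'⟩ h
      have h1 : (fun i => c.1.out (i + s)) = (fun i => c'.1.out (i + s')) :=
        congrArg Subtype.val h
      have hc : c.1 = c'.1 := by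
        have e1 : Quotient.mk (rotSetoid n q) c.1.out
            = Quotient.mk (rotSetoid n q) (fun i => c.1.out (i + s)) :=
          Quotient.sound ⟨s, rfl⟩
        have e2 : Quotient.mk (rotSetoid n q) c'.1.out
            = Quotient.mk (rotSetoid n q) (fun i => c'.1.out (i + s')) :=
          Quotient.sound ⟨s', rfl⟩
        rw [Quotient.out_eq] at e1 e2
        rw [e1, e2, h1]
      have hout : c.1.out = c'.1.out := by rw [hc]
      have hs : s = s' := by
        rw [hout] at h1
        exact rot_inj (out_aperiodic c') h1
      exact Prod.ext (Subtype.ext hc) hs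
    · rintro ⟨w, hw⟩
      obtain ⟨s, hs⟩ := Quotient.exact ((Quotient.mk (rotSetoid n q) w).out_eq)
      exact ⟨⟨⟨Quotient.mk (rotSetoid n q) w, w, rfl, hw⟩, s⟩, Subtype.ext hs⟩
  have hcard : Nat.card {w : ZMod n → Fin q // Aperiodic1D n q w} = Nat.card (T × ZMod n) :=
    Nat.card_congr (Equiv.ofBijective F hF).symm
  rw [aCount, hcard, Nat.card_prod, Nat.card_zmod, mul_comm]
  rfl

end Orbits

end LyndonAux

/-- The number of Lyndon words (aperiodic necklaces) of length `n` over an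
alphabet of size `q` equals `(1/n) · ∑_{d ∣ n} μ(n/d) · q^d`. -/
theorem lyndon_count_moebius (n q : ℕ) (hn : 0 < n) :
    (n : ℤ) * lyndonCount n q =
      ∑ d ∈ n.divisors, ArithmeticFunction.moebius (n / d) * (q : ℤ) ^ d := by
  haveI : NeZero n := ⟨hn.ne'⟩
  have hinv := (ArithmeticFunction.sum_eq_iff_sum_mul_moebius_eq
    (f := fun d => (LyndonAux.aCount d q : ℤ)) (g := fun m => (q : ℤ) ^ m)).mp
    (LyndonAux.sum_aCount q) n hn
  have hA : (LyndonAux.aCount n q : ℤ) = (n : ℤ) * lyndonCount n q := by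
    rw [LyndonAux.aCount_eq hn]; push_cast; ring
  rw [← hA, ← hinv,
    ← Nat.sum_divisorsAntidiagonal'
      (f := fun a b => (ArithmeticFunction.moebius a : ℤ) * (q : ℤ) ^ b)]
  exact Finset.sum_congr rfl fun x _ => rfl
end

section
/- The number of orbits of Σ^{(n_1,…,n_d)} (d-dimensional arrays of size n_1 × ⋯ × n_d over an alphabet Σ of size q) under the translation action of Z_{n_1} × ⋯ × Z_{n_d} equals (1/N) · ∑_{f_1 | n_1} φ(f_1) ∑_{f_2 | n_2} φ(f_2) ⋯ ∑_{f_d | n_d} φ(f_d) · q^{N / lcm(f_1,…,f_d)}, where N = n_1 ⋯ n_d. -/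
/-- Translation equivalence on `d`-dimensional words of size `(n 0, …, n (d-1))`
over an alphabet of size `q`: `u ~ v` iff `v` is a coordinatewise cyclic
translation of `u`. The equivalence classes are multidimensional necklaces. -/
def transSetoid (d q : ℕ) (n : Fin d → ℕ) :
    Setoid (((i : Fin d) → ZMod (n i)) → Fin q) where
  r u v := ∃ g : (i : Fin d) → ZMod (n i), (fun p => u (p + g)) = v
  iseqv := by
    refine ⟨fun u => ⟨0, by funext p; rw [add_zero]⟩, ?_, ?_⟩
    · rintro u v ⟨g, rfl⟩
      exact ⟨-g, by funext p; simp⟩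
    · rintro u v w ⟨g, rfl⟩ ⟨h, rfl⟩
      exact ⟨h + g, by funext p; show u (p + (h + g)) = u (p + h + g); rw [add_assoc]⟩

/-- The translation action of `∏ ZMod (n i)` on `d`-dimensional words. -/
instance transAction (d q : ℕ) (n : Fin d → ℕ) :
    AddAction ((i : Fin d) → ZMod (n i)) (((i : Fin d) → ZMod (n i)) → Fin q) where
  vadd g u := fun p => u (p + g)
  zero_vadd u := by funext p; show u (p + 0) = u p; rw [add_zero]
  add_vadd g h u := by
    funext p
    show u (p + (g + h)) = u (p + g + h)
    rw [add_assoc]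

theorem transSetoid_eq (d q : ℕ) (n : Fin d → ℕ) :
    transSetoid d q n =
      AddAction.orbitRel ((i : Fin d) → ZMod (n i)) (((i : Fin d) → ZMod (n i)) → Fin q) := by
  ext u v
  show (∃ g, (fun p => u (p + g)) = v) ↔ u ∈ AddAction.orbit _ v
  rw [AddAction.mem_orbit_iff]
  constructor
  · rintro ⟨g, rfl⟩
    refine ⟨-g, ?_⟩
    funext p
    show u (p + -g + g) = u p
    rw [add_assoc, neg_add_cancel, add_zero]
  · rintro ⟨g, rfl⟩
    refine ⟨-g, ?_⟩
    funext p
    show v (p + -g + g) = v p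
    rw [add_assoc, neg_add_cancel, add_zero]

/-- Words fixed by translation by `g` correspond to functions on the quotient
by the cyclic subgroup generated by `g`. -/
noncomputable def fixedEquiv (d q : ℕ) (n : Fin d → ℕ) (g : (i : Fin d) → ZMod (n i)) :
    (AddAction.fixedBy (((i : Fin d) → ZMod (n i)) → Fin q) g) ≃
      ((((i : Fin d) → ZMod (n i)) ⧸ AddSubgroup.zmultiples g) → Fin q) where
  toFun u := Quotient.lift u.1 (by
    intro p₁ p₂ h
    have h' : -p₁ + p₂ ∈ AddSubgroup.zmultiples g := QuotientAddGroup.leftRel_apply.mp h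
    have hu : g +ᵥ u.1 = u.1 := u.2
    have hfix : (-p₁ + p₂) +ᵥ u.1 = u.1 := vadd_eq_self_of_mem_zmultiples h' hu
    calc u.1 p₁ = ((-p₁ + p₂) +ᵥ u.1) p₁ := by rw [hfix]
    _ = u.1 (p₁ + (-p₁ + p₂)) := rfl
    _ = u.1 p₂ := by rw [← add_assoc, add_neg_cancel, zero_add])
  invFun v := ⟨fun p => v (QuotientAddGroup.mk p), by
    show (fun p => v (QuotientAddGroup.mk (p + g))) = _
    funext p
    have : (QuotientAddGroup.mk (p + g) : _ ⧸ AddSubgroup.zmultiples g) =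
        QuotientAddGroup.mk p := by
      apply QuotientAddGroup.eq.mpr
      have h : -(p + g) + p = -g := by abel
      rw [h]
      exact AddSubgroup.neg_mem _ (AddSubgroup.mem_zmultiples g)
    rw [this]⟩
  left_inv u := Subtype.ext rfl
  right_inv v := funext fun x => Quotient.inductionOn x fun p => rfl

theorem addOrderOf_pi {d : ℕ} {n : Fin d → ℕ} (g : (i : Fin d) → ZMod (n i)) :
    addOrderOf g = Finset.univ.lcm fun i => addOrderOf (g i) := by
  refine Nat.dvd_antisymm ?_ (Finset.lcm_dvd fun i _ => ?_)
  · rw [addOrderOf_dvd_iff_nsmul_eq_zero]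
    funext i
    have hd : addOrderOf (g i) ∣ Finset.univ.lcm fun i => addOrderOf (g i) :=
      Finset.dvd_lcm (Finset.mem_univ i)
    have := addOrderOf_dvd_iff_nsmul_eq_zero.mp hd
    simpa using this
  · rw [addOrderOf_dvd_iff_nsmul_eq_zero]
    have := addOrderOf_nsmul_eq_zero g
    exact congrFun this i

/-- The number of `d`-dimensional necklaces of size `(n_1, …, n_d)` over an
alphabet of size `q` equals
`(1/N) ∑_{f_1 ∣ n_1} φ(f_1) ⋯ ∑_{f_d ∣ n_d} φ(f_d) q^{N / lcm(f_1,…,f_d)}`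
where `N = n_1 ⋯ n_d`. -/
theorem multidim_necklace_count (d q : ℕ) (n : Fin d → ℕ) (hn : ∀ i, 0 < n i) :
    (∏ i, n i) * Nat.card (Quotient (transSetoid d q n)) =
      ∑ f ∈ Fintype.piFinset (fun i => (n i).divisors),
        (∏ i, Nat.totient (f i)) * q ^ ((∏ i, n i) / Finset.univ.lcm f) := by
  classical
  haveI : ∀ i, NeZero (n i) := fun i => ⟨(hn i).ne'⟩
  have hcardG : Fintype.card ((i : Fin d) → ZMod (n i)) = ∏ i, n i := by
    simp [Fintype.card_pi, ZMod.card]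
  -- step 1: Burnside
  rw [transSetoid_eq]
  have hb := AddAction.sum_card_fixedBy_eq_card_orbits_mul_card_addGroup
    ((i : Fin d) → ZMod (n i)) (((i : Fin d) → ZMod (n i)) → Fin q)
  rw [hcardG] at hb
  rw [Nat.card_eq_fintype_card, mul_comm, ← hb]
  -- step 2: fixed point count
  have hfix : ∀ g : (i : Fin d) → ZMod (n i),
      Fintype.card (AddAction.fixedBy (((i : Fin d) → ZMod (n i)) → Fin q) g) =
        q ^ ((∏ i, n i) / Finset.univ.lcm fun i => addOrderOf (g i)) := by
    intro g
    rw [← Nat.card_eq_fintype_card, Nat.card_congr (fixedEquiv d q n g), Nat.card_fun,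
      Nat.card_eq_fintype_card (α := Fin q), Fintype.card_fin]
    congr 1
    -- card of quotient = N / addOrderOf g
    have hindex := AddSubgroup.index_mul_card (AddSubgroup.zmultiples g)
    rw [Nat.card_zmultiples] at hindex
    have hcard : Nat.card ((i : Fin d) → ZMod (n i)) = ∏ i, n i := by
      rw [Nat.card_eq_fintype_card, hcardG]
    rw [hcard] at hindex
    have hpos : 0 < addOrderOf g := addOrderOf_pos g
    have : (AddSubgroup.zmultiples g).index = (∏ i, n i) / addOrderOf g :=
      (Nat.div_eq_of_eq_mul_left hpos hindex.symm).symm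
    rw [show Nat.card (((i : Fin d) → ZMod (n i)) ⧸ AddSubgroup.zmultiples g) =
      (AddSubgroup.zmultiples g).index from rfl, this, addOrderOf_pi g]
  simp_rw [hfix]
  -- step 3: regroup the sum over tuples of orders
  rw [← Finset.sum_fiberwise_of_maps_to
    (g := fun (g : (i : Fin d) → ZMod (n i)) => fun i => addOrderOf (g i))
    (t := Fintype.piFinset fun i => (n i).divisors)
    (fun g _ => by
      rw [Fintype.mem_piFinset]
      intro i
      rw [Nat.mem_divisors]
      exact ⟨(addOrderOf_dvd_card).trans (by rw [ZMod.card]), (hn i).ne'⟩)]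
  refine Finset.sum_congr rfl fun f hf => ?_
  have hsum : ∀ g ∈ Finset.univ.filter
      (fun g : (i : Fin d) → ZMod (n i) => (fun i => addOrderOf (g i)) = f),
      q ^ ((∏ i, n i) / Finset.univ.lcm fun i => addOrderOf (g i)) =
        q ^ ((∏ i, n i) / Finset.univ.lcm f) := by
    intro g hg
    rw [Finset.mem_filter] at hg
    rw [hg.2]
  rw [Finset.sum_congr rfl hsum, Finset.sum_const, smul_eq_mul]
  congr 1
  -- step 4: the fiber has cardinality ∏ φ (f i)
  have hfilter : Finset.univ.filter
      (fun g : (i : Fin d) → ZMod (n i) => (fun i => addOrderOf (g i)) = f) =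
      Fintype.piFinset fun i => Finset.univ.filter fun x : ZMod (n i) => addOrderOf x = f i := by
    ext g
    simp [Fintype.mem_piFinset, funext_iff]
  rw [hfilter, Fintype.card_piFinset]
  refine Finset.prod_congr rfl fun i _ => ?_
  rw [Fintype.mem_piFinset] at hf
  have hdvd : f i ∣ Fintype.card (ZMod (n i)) := by
    rw [ZMod.card]
    exact (Nat.mem_divisors.mp (hf i)).1
  have := IsAddCyclic.card_addOrderOf_eq_totient (α := ZMod (n i)) (d := f i) hdvd
  convert this using 2
end

section
/- For two-dimensional words: the number of orbits of Σ^{n_1 × n_2} (|Σ| = q) under the action of Z_{n_1} × Z_{n_2} by row and column cyclic shifts equals (1/(n_1 n_2)) · ∑_{f_1 | n_1} ∑_{f_2 | n_2} φ(f_1) φ(f_2) q^{n_1 n_2 / lcm(f_1, f_2)}. -/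
/-- Translation equivalence on 2-dimensional words of size `(n₁, n₂)` over an
alphabet of size `q`: `u ~ v` iff `v` is obtained from `u` by cyclically
shifting rows and columns. -/
def transSetoid2 (n₁ n₂ q : ℕ) : Setoid (ZMod n₁ × ZMod n₂ → Fin q) where
  r u v := ∃ g : ZMod n₁ × ZMod n₂, (fun p => u (p + g)) = v
  iseqv := by
    refine ⟨fun u => ⟨0, by funext p; rw [add_zero]⟩, ?_, ?_⟩
    · rintro u v ⟨g, rfl⟩
      exact ⟨-g, by funext p; simp⟩
    · rintro u v w ⟨g, rfl⟩ ⟨h, rfl⟩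
      exact ⟨h + g, by funext p; show u (p + (h + g)) = u (p + h + g); rw [add_assoc]⟩



variable {n₁ n₂ q : ℕ}

/-- The shift action of `ZMod n₁ × ZMod n₂` on 2D words. -/
instance shiftAction (n₁ n₂ q : ℕ) :
    AddAction (ZMod n₁ × ZMod n₂) (ZMod n₁ × ZMod n₂ → Fin q) where
  vadd g u := fun p => u (p + g)
  zero_vadd u := by funext p; show u (p + 0) = u p; rw [add_zero]
  add_vadd g h u := by
    funext p
    show u (p + (g + h)) = u (p + g + h)
    rw [add_assoc]

lemma vadd_def (g : ZMod n₁ × ZMod n₂) (u : ZMod n₁ × ZMod n₂ → Fin q) :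
    g +ᵥ u = fun p => u (p + g) := rfl

/-- invariance under all integer multiples -/
lemma fixed_invariant {g : ZMod n₁ × ZMod n₂} {u : ZMod n₁ × ZMod n₂ → Fin q}
    (hu : ∀ p, u (p + g) = u p) {x : ZMod n₁ × ZMod n₂}
    (hx : x ∈ AddSubgroup.zmultiples g) (p : ZMod n₁ × ZMod n₂) : u (p + x) = u p := by
  let S : AddSubgroup (ZMod n₁ × ZMod n₂) :=
    { carrier := {x | ∀ p, u (p + x) = u p}
      zero_mem' := fun p => by rw [add_zero]
      add_mem' := fun {a b} ha hb p => by rw [← add_assoc, hb, ha]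
      neg_mem' := fun {a} ha p => by
        have := ha (p + -a); rw [neg_add_cancel_right] at this; exact this.symm }
  have hS : AddSubgroup.zmultiples g ≤ S :=
    (AddSubgroup.zmultiples_le).mpr hu
  exact hS hx p

lemma card_fixedBy [NeZero n₁] [NeZero n₂] (g : ZMod n₁ × ZMod n₂) :
    Nat.card (AddAction.fixedBy (ZMod n₁ × ZMod n₂ → Fin q) g) =
      q ^ ((n₁ * n₂) / addOrderOf g) := by
  have hfix : ∀ u : AddAction.fixedBy (ZMod n₁ × ZMod n₂ → Fin q) g, ∀ p, u.1 (p + g) = u.1 p := by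
    rintro ⟨u, hu⟩ p
    have : g +ᵥ u = u := hu
    exact congrFun this p
  let e : AddAction.fixedBy (ZMod n₁ × ZMod n₂ → Fin q) g ≃
      (((ZMod n₁ × ZMod n₂) ⧸ AddSubgroup.zmultiples g) → Fin q) :=
    { toFun := fun u => Quotient.lift u.1 (by
        intro p p' h
        have h' : -p + p' ∈ AddSubgroup.zmultiples g := QuotientAddGroup.leftRel_apply.mp h
        have := fixed_invariant (hfix u) h' p
        rw [add_neg_cancel_left] at this
        exact this.symm)
      invFun := fun f => ⟨fun p => f (QuotientAddGroup.mk p), by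
        show g +ᵥ (fun p => f (QuotientAddGroup.mk p)) = (fun p => f (QuotientAddGroup.mk p))
        rw [vadd_def]
        funext p
        have : QuotientAddGroup.mk (s := AddSubgroup.zmultiples g) (p + g) =
            QuotientAddGroup.mk p := by
          rw [QuotientAddGroup.eq]
          have : -(p + g) + p = -g := by abel
          rw [this]
          exact neg_mem (AddSubgroup.mem_zmultiples g)
        rw [this]⟩
      left_inv := fun u => by ext p; rfl
      right_inv := fun f => by
        funext c
        induction c using QuotientAddGroup.induction_on
        rfl }
  rw [Nat.card_congr e, Nat.card_fun, Nat.card_eq_fintype_card (α := Fin q), Fintype.card_fin]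
  congr 1
  have hcard : Nat.card (ZMod n₁ × ZMod n₂) = n₁ * n₂ := by
    rw [Nat.card_prod, Nat.card_zmod, Nat.card_zmod]
  have h := AddSubgroup.card_eq_card_quotient_mul_card_addSubgroup
    (AddSubgroup.zmultiples g)
  rw [Nat.card_zmultiples, hcard] at h
  have hpos : 0 < addOrderOf g := addOrderOf_pos g
  rw [h, Nat.mul_div_cancel _ hpos]

lemma sum_addOrderOf (n : ℕ) [NeZero n] (F : ℕ → ℕ) :
    ∑ a : ZMod n, F (addOrderOf a) = ∑ f ∈ n.divisors, Nat.totient f * F f := by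
  classical
  rw [← Finset.sum_fiberwise_of_maps_to (g := fun a : ZMod n => addOrderOf a)
    (t := n.divisors) (fun a _ => Nat.mem_divisors.mpr
      ⟨by simpa [ZMod.card] using addOrderOf_dvd_card (x := a), NeZero.ne n⟩)]
  refine Finset.sum_congr rfl fun f hf => ?_
  have h1 : ∑ a ∈ Finset.univ.filter (fun a : ZMod n => addOrderOf a = f), F (addOrderOf a)
      = (Finset.univ.filter (fun a : ZMod n => addOrderOf a = f)).card * F f := by
    rw [Finset.sum_congr rfl fun a ha => by rw [(Finset.mem_filter.mp ha).2],
      Finset.sum_const, smul_eq_mul]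
  rw [h1]
  congr 1
  have := IsAddCyclic.card_addOrderOf_eq_totient (α := ZMod n)
    (d := f) (by rw [ZMod.card]; exact (Nat.mem_divisors.mp hf).1)
  simpa using this

/-- The number of orbits of 2D words of size `(n₁, n₂)` over a `q`-letter
alphabet under the action of `Z_{n₁} × Z_{n₂}` equals
`(1/(n₁n₂)) ∑_{f₁ ∣ n₁} ∑_{f₂ ∣ n₂} φ(f₁) φ(f₂) q^{n₁n₂ / lcm(f₁,f₂)}`. -/
theorem two_dim_necklace_count (n₁ n₂ q : ℕ) (h₁ : 0 < n₁) (h₂ : 0 < n₂) :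
    (n₁ * n₂) * Nat.card (Quotient (transSetoid2 n₁ n₂ q)) =
      ∑ f₁ ∈ n₁.divisors, ∑ f₂ ∈ n₂.divisors,
        Nat.totient f₁ * Nat.totient f₂ * q ^ ((n₁ * n₂) / Nat.lcm f₁ f₂) := by
  haveI : NeZero n₁ := ⟨h₁.ne'⟩
  haveI : NeZero n₂ := ⟨h₂.ne'⟩
  classical
  have hset : transSetoid2 n₁ n₂ q =
      AddAction.orbitRel (ZMod n₁ × ZMod n₂) (ZMod n₁ × ZMod n₂ → Fin q) := by
    ext u v
    rw [AddAction.orbitRel_apply, AddAction.mem_orbit_iff]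
    constructor
    · rintro ⟨g, rfl⟩
      exact ⟨-g, neg_vadd_vadd g u⟩
    · rintro ⟨g, hg⟩
      exact ⟨-g, by rw [← vadd_def, ← hg, neg_vadd_vadd]⟩
  letI : ∀ a : ZMod n₁ × ZMod n₂,
      Fintype (AddAction.fixedBy (ZMod n₁ × ZMod n₂ → Fin q) a) :=
    fun a => Fintype.ofFinite _
  letI : Fintype (AddAction.orbitRel.Quotient (ZMod n₁ × ZMod n₂)
      (ZMod n₁ × ZMod n₂ → Fin q)) := Fintype.ofFinite _
  have hb := AddAction.sum_card_fixedBy_eq_card_orbits_mul_card_addGroup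
    (ZMod n₁ × ZMod n₂) (ZMod n₁ × ZMod n₂ → Fin q)
  have hq : Nat.card (Quotient (transSetoid2 n₁ n₂ q)) =
      Fintype.card (AddAction.orbitRel.Quotient (ZMod n₁ × ZMod n₂)
        (ZMod n₁ × ZMod n₂ → Fin q)) := by
    rw [← Nat.card_eq_fintype_card]
    exact congrArg (fun s => Nat.card (Quotient s)) hset
  have hG : Fintype.card (ZMod n₁ × ZMod n₂) = n₁ * n₂ := by
    simp [ZMod.card]
  rw [hG] at hb
  rw [hq, mul_comm, ← hb]
  have hfix : ∀ a : ZMod n₁ × ZMod n₂,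
      Fintype.card (AddAction.fixedBy (ZMod n₁ × ZMod n₂ → Fin q) a)
        = q ^ ((n₁ * n₂) / addOrderOf a) := fun a => by
    rw [← Nat.card_eq_fintype_card, card_fixedBy]
  calc ∑ a : ZMod n₁ × ZMod n₂,
        Fintype.card (AddAction.fixedBy (ZMod n₁ × ZMod n₂ → Fin q) a)
      = ∑ a : ZMod n₁ × ZMod n₂, q ^ ((n₁ * n₂) / addOrderOf a) := by
        exact Finset.sum_congr rfl fun a _ => hfix a
    _ = ∑ a : ZMod n₁, ∑ b : ZMod n₂,
          q ^ ((n₁ * n₂) / Nat.lcm (addOrderOf a) (addOrderOf b)) := by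
        rw [Fintype.sum_prod_type]
        exact Finset.sum_congr rfl fun a _ => Finset.sum_congr rfl fun b _ => by
          rw [Prod.addOrderOf]
    _ = ∑ a : ZMod n₁, ∑ f₂ ∈ n₂.divisors,
          Nat.totient f₂ * q ^ ((n₁ * n₂) / Nat.lcm (addOrderOf a) f₂) := by
        exact Finset.sum_congr rfl fun a _ =>
          sum_addOrderOf n₂ (fun f₂ => q ^ ((n₁ * n₂) / Nat.lcm (addOrderOf a) f₂))
    _ = ∑ f₁ ∈ n₁.divisors, Nat.totient f₁ * ∑ f₂ ∈ n₂.divisors,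
          Nat.totient f₂ * q ^ ((n₁ * n₂) / Nat.lcm f₁ f₂) :=
        sum_addOrderOf n₁ (fun f₁ => ∑ f₂ ∈ n₂.divisors,
          Nat.totient f₂ * q ^ ((n₁ * n₂) / Nat.lcm f₁ f₂))
    _ = ∑ f₁ ∈ n₁.divisors, ∑ f₂ ∈ n₂.divisors,
          Nat.totient f₁ * Nat.totient f₂ * q ^ ((n₁ * n₂) / Nat.lcm f₁ f₂) := by
        refine Finset.sum_congr rfl fun f₁ _ => ?_
        rw [Finset.mul_sum]
        exact Finset.sum_congr rfl fun f₂ _ => by ring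
end

section
/- Let N(f_1,…,f_d) denote the number of multidimensional necklaces of size (f_1,…,f_d) over an alphabet of size q, and L(n_1,…,n_d) the number of aperiodic multidimensional necklaces (Lyndon words). Then N(n_1,…,n_d) = ∑_{f_1 | n_1} ⋯ ∑_{f_d | n_d} L(f_1,…,f_d), and consequently L(n_1,…,n_d) = ∑_{f_1 | n_1} μ(n_1/f_1) ⋯ ∑_{f_d | n_d} μ(n_d/f_d) · N(f_1,…,f_d). -/
/-- The number `N(n_1,…,n_d)` of multidimensional necklaces of size
`(n 0, …, n (d-1))` over an alphabet of size `q`. -/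
noncomputable def nCount (d q : ℕ) (n : Fin d → ℕ) : ℕ :=
  Nat.card (Quotient (transSetoid d q n))

/-- A `d`-dimensional word `w` of size `n` is aperiodic if it is not a tiling
of a subword of size `m ≠ n` with `m i ∣ n i` for every `i`; equivalently, for
no such `m` is `w` invariant under the shift by `m i` in every dimension `i`. -/
def AperiodicMD (d q : ℕ) (n : Fin d → ℕ) (w : ((i : Fin d) → ZMod (n i)) → Fin q) : Prop :=
  ∀ m : Fin d → ℕ, (∀ i, m i ∣ n i) → m ≠ n →
    ¬ ∀ i : Fin d,
      (fun p => w (p + fun j => if j = i then ((m i : ℕ) : ZMod (n j)) else 0)) = w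

/-- The number `L(n_1,…,n_d)` of aperiodic multidimensional necklaces (Lyndon
words) of size `(n 0, …, n (d-1))` over an alphabet of size `q`. -/
noncomputable def lCount (d q : ℕ) (n : Fin d → ℕ) : ℕ :=
  Nat.card {c : Quotient (transSetoid d q n) //
    ∃ w : ((i : Fin d) → ZMod (n i)) → Fin q,
      Quotient.mk (transSetoid d q n) w = c ∧ AperiodicMD d q n w}

namespace MDNL

variable {d q : ℕ}

/-- Words of size `n`. -/
abbrev Word (d q : ℕ) (n : Fin d → ℕ) := ((i : Fin d) → ZMod (n i)) → Fin q

/-- `g` is a period (shift fixing `w`). -/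
def Fix (n : Fin d → ℕ) (w : Word d q n) (g : (i : Fin d) → ZMod (n i)) : Prop :=
  (fun p => w (p + g)) = w

/-- The vector supported at coordinate `i` with value `c`. -/
def sing (n : Fin d → ℕ) (i : Fin d) (c : ℕ) : (j : Fin d) → ZMod (n j) :=
  fun j => if j = i then ((c : ℕ) : ZMod (n j)) else 0

lemma aperiodic_iff (n : Fin d → ℕ) (w : Word d q n) :
    AperiodicMD d q n w ↔
      ∀ m : Fin d → ℕ, (∀ i, m i ∣ n i) → m ≠ n → ¬ ∀ i, Fix n w (sing n i (m i)) :=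
  Iff.rfl

lemma fix_zero (n : Fin d → ℕ) (w : Word d q n) : Fix n w 0 := by
  funext p; rw [add_zero]

lemma fix_add {n : Fin d → ℕ} {w : Word d q n} {g h : (i : Fin d) → ZMod (n i)}
    (hg : Fix n w g) (hh : Fix n w h) : Fix n w (g + h) := by
  funext p
  calc w (p + (g + h)) = w ((p + h) + g) := by rw [add_assoc, add_comm g h]
    _ = w (p + h) := congrFun hg (p + h)
    _ = w p := congrFun hh p

lemma fix_nsmul {n : Fin d → ℕ} {w : Word d q n} {g : (i : Fin d) → ZMod (n i)}
    (hg : Fix n w g) (k : ℕ) : Fix n w (k • g) := by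
  induction k with
  | zero => simpa using fix_zero n w
  | succ k ih => rw [succ_nsmul]; exact fix_add ih hg

lemma sing_mul (n : Fin d → ℕ) (i : Fin d) (c k : ℕ) :
    sing n i (c * k) = c • sing n i k := by
  funext j
  simp only [sing, Pi.smul_apply]
  split
  · push_cast [nsmul_eq_mul]; ring
  · simp

lemma fix_sing_mul {n : Fin d → ℕ} {w : Word d q n} {i : Fin d} {k : ℕ}
    (h : Fix n w (sing n i k)) (c : ℕ) : Fix n w (sing n i (c * k)) := by
  rw [sing_mul]; exact fix_nsmul h c

lemma sing_congr {n : Fin d → ℕ} {i : Fin d} {c c' : ℕ}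
    (h : ((c : ℕ) : ZMod (n i)) = ((c' : ℕ) : ZMod (n i))) : sing n i c = sing n i c' := by
  funext j
  simp only [sing]
  split
  · rename_i hj; subst hj; exact h
  · rfl

lemma sing_self (n : Fin d → ℕ) (i : Fin d) : sing n i (n i) = 0 := by
  funext j
  simp only [sing]
  split
  · rename_i hj; subst hj; exact ZMod.natCast_self _
  · rfl

/-- The projection between tori, for componentwise divisibility. -/
def proj (n f : Fin d → ℕ) (h : ∀ i, f i ∣ n i) (p : (i : Fin d) → ZMod (n i)) :
    (i : Fin d) → ZMod (f i) :=
  fun i => ZMod.castHom (h i) (ZMod (f i)) (p i)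

lemma proj_add (n f : Fin d → ℕ) (h : ∀ i, f i ∣ n i) (p g : (i : Fin d) → ZMod (n i)) :
    proj n f h (p + g) = proj n f h p + proj n f h g :=
  funext fun i => map_add _ _ _

/-- A section of the projection. -/
def sec (n f : Fin d → ℕ) (x : (i : Fin d) → ZMod (f i)) : (i : Fin d) → ZMod (n i) :=
  fun i => (((x i).val : ℕ) : ZMod (n i))

lemma proj_sec (n f : Fin d → ℕ) (h : ∀ i, f i ∣ n i) (hf : ∀ i, 0 < f i)
    (x : (i : Fin d) → ZMod (f i)) : proj n f h (sec n f x) = x := by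
  funext i
  haveI : NeZero (f i) := ⟨(hf i).ne'⟩
  show ZMod.castHom (h i) (ZMod (f i)) (((x i).val : ℕ) : ZMod (n i)) = x i
  rw [map_natCast]
  exact ZMod.natCast_rightInverse (x i)

/-- Pullback of a word of size `f` to a word of size `n` (tiling). -/
def pull (n f : Fin d → ℕ) (h : ∀ i, f i ∣ n i) (v : Word d q f) : Word d q n :=
  fun p => v (proj n f h p)

lemma pull_inj (n f : Fin d → ℕ) (h : ∀ i, f i ∣ n i) (hf : ∀ i, 0 < f i)
    {v v' : Word d q f} (hvv : pull n f h v = pull n f h v') : v = v' := by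
  funext x
  have := congrFun hvv (sec n f x)
  simpa only [pull, proj_sec n f h hf] using this

lemma proj_sing (n f : Fin d → ℕ) (h : ∀ i, f i ∣ n i) (i : Fin d) (c : ℕ) :
    proj n f h (sing n i c) = sing f i c := by
  funext j
  simp only [proj, sing]
  split
  · exact map_natCast _ _
  · exact map_zero _

lemma fix_pull (n f : Fin d → ℕ) (h : ∀ i, f i ∣ n i) (hf : ∀ i, 0 < f i)
    (v : Word d q f) (g : (i : Fin d) → ZMod (n i)) :
    Fix n (pull n f h v) g ↔ Fix f v (proj n f h g) := by
  constructor
  · intro H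
    funext x
    have h2 := congrFun H (sec n f x)
    simp only [pull, proj_add, proj_sec n f h hf] at h2
    exact h2
  · intro H
    funext p
    show v (proj n f h (p + g)) = v (proj n f h p)
    rw [proj_add]
    exact congrFun H (proj n f h p)

/-- For an aperiodic word, any single-coordinate period is a multiple of the size. -/
lemma dvd_of_fix_sing (f : Fin d → ℕ) (hf : ∀ i, 0 < f i) (v : Word d q f)
    (hv : AperiodicMD d q f v) (i : Fin d) (k : ℕ) (hk : Fix f v (sing f i k)) :
    f i ∣ k := by
  set G := Nat.gcd k (f i) with hG
  have hg : (G : ℤ) = k * Nat.gcdA k (f i) + f i * Nat.gcdB k (f i) := Nat.gcd_eq_gcd_ab k (f i)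
  set a := Nat.gcdA k (f i)
  set b := Nat.gcdB k (f i)
  have hfpos : (0:ℤ) < (f i : ℤ) := by exact_mod_cast hf i
  set c : ℕ := (a % (f i)).toNat with hc
  have hc' : (c : ℤ) = a % (f i) := Int.toNat_of_nonneg (Int.emod_nonneg a hfpos.ne')
  have hdvd : ((f i : ℕ) : ℤ) ∣ ((c * k : ℕ) : ℤ) - ((G : ℕ) : ℤ) := by
    refine ⟨-(a / (f i)) * k - b, ?_⟩
    push_cast
    rw [hc', Int.emod_def, hg]
    ring
  have key : ((c * k : ℕ) : ZMod (f i)) = ((G : ℕ) : ZMod (f i)) := by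
    have h0 := (ZMod.intCast_zmod_eq_zero_iff_dvd
      (((c * k : ℕ) : ℤ) - ((G : ℕ) : ℤ)) (f i)).mpr hdvd
    push_cast at h0 ⊢
    rwa [sub_eq_zero] at h0
  have hfixG : Fix f v (sing f i G) := by
    rw [← sing_congr key]
    exact fix_sing_mul hk c
  by_cases hm : Function.update f i G = f
  · have : G = f i := by
      have := congrFun hm i
      rwa [Function.update_self] at this
    rw [← this]
    exact Nat.gcd_dvd_left k (f i)
  · exfalso
    refine (aperiodic_iff f v).mp hv (Function.update f i G) ?_ hm ?_
    · intro j
      by_cases hj : j = i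
      · subst hj; rw [Function.update_self]; exact Nat.gcd_dvd_right k (f j)
      · rw [Function.update_of_ne hj]
    · intro j
      by_cases hj : j = i
      · subst hj; rw [Function.update_self]; exact hfixG
      · rw [Function.update_of_ne hj, sing_self]; exact fix_zero f v

/-- A word with all the single-coordinate periods `f i` is a pullback. -/
lemma exists_pull_of_fix (n f : Fin d → ℕ) (hn : ∀ i, 0 < n i) (h : ∀ i, f i ∣ n i)
    (w : Word d q n) (hw : ∀ i, Fix n w (sing n i (f i))) :
    ∃ v : Word d q f, pull n f h v = w := by
  refine ⟨fun x => w (sec n f x), ?_⟩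
  funext p
  show w (sec n f (proj n f h p)) = w p
  have hr : ∀ i, ∃ c : ℕ, p i - sec n f (proj n f h p) i = ((f i * c : ℕ) : ZMod (n i)) := by
    intro i
    haveI : NeZero (n i) := ⟨(hn i).ne'⟩
    set a := (p i).val with ha
    have hp : ((a : ℕ) : ZMod (n i)) = p i := ZMod.natCast_rightInverse (p i)
    refine ⟨a / f i, ?_⟩
    have hsec : sec n f (proj n f h p) i = ((a % f i : ℕ) : ZMod (n i)) := by
      show ((((ZMod.castHom (h i) (ZMod (f i))) (p i)).val : ℕ) : ZMod (n i)) = _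
      rw [← hp, map_natCast, ZMod.val_natCast]
    rw [hsec, ← hp, ← Nat.cast_sub (Nat.mod_le a (f i))]
    congr 1
    have := Nat.mod_add_div a (f i)
    omega
  choose c hc using hr
  have hsum : (fun j => p j - sec n f (proj n f h p) j) = ∑ i, sing n (i : Fin d) (f i * c i) := by
    funext j
    rw [Finset.sum_apply]
    have : ∀ i : Fin d, sing n i (f i * c i) j
        = if j = i then ((f i * c i : ℕ) : ZMod (n j)) else 0 := fun i => rfl
    simp only [this]
    rw [Finset.sum_ite_eq (Finset.univ : Finset (Fin d)) j
      (fun i => ((f i * c i : ℕ) : ZMod (n j)))]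
    simp [hc j]
  have hfix : Fix n w (fun j => p j - sec n f (proj n f h p) j) := by
    rw [hsum]
    refine Finset.sum_induction _ (Fix n w) (fun _ _ => fix_add) (fix_zero n w) ?_
    intro i _
    have := fix_sing_mul (hw i) (c i)
    rwa [mul_comm (c i) (f i)] at this
  have hpt : sec n f (proj n f h p) + (fun j => p j - sec n f (proj n f h p) j) = p := by
    funext j
    show sec n f (proj n f h p) j + (p j - sec n f (proj n f h p) j) = p j
    ring
  calc w (sec n f (proj n f h p))
      = w (sec n f (proj n f h p) + fun j => p j - sec n f (proj n f h p) j) :=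
        (congrFun hfix (sec n f (proj n f h p))).symm
    _ = w p := by rw [hpt]

lemma pull_self (n : Fin d → ℕ) (v : Word d q n) :
    pull n n (fun _ => dvd_rfl) v = v := by
  funext p
  show v (proj n n (fun _ => dvd_rfl) p) = v p
  congr 1
  funext i
  show ZMod.castHom dvd_rfl (ZMod (n i)) (p i) = p i
  rw [ZMod.castHom_self]
  rfl

lemma pull_pull (n m f : Fin d → ℕ) (hm : ∀ i, m i ∣ n i) (hf : ∀ i, f i ∣ m i)
    (v : Word d q f) :
    pull n m hm (pull m f hf v) = pull n f (fun i => (hf i).trans (hm i)) v := by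
  funext p
  show v (proj m f hf (proj n m hm p)) = v (proj n f _ p)
  congr 1
  funext i
  show ZMod.castHom (hf i) (ZMod (f i)) (ZMod.castHom (hm i) (ZMod (m i)) (p i)) = _
  rw [← RingHom.comp_apply, ZMod.castHom_comp]
  rfl

/-- Every word is the pullback (tiling) of an aperiodic word. -/
lemma exists_aperiodic_pull (t : ℕ) : ∀ (n : Fin d → ℕ), (∀ i, 0 < n i) → (∏ i, n i) ≤ t →
    ∀ w : Word d q n, ∃ (f : Fin d → ℕ) (h : ∀ i, f i ∣ n i) (v : Word d q f),
      AperiodicMD d q f v ∧ pull n f h v = w := by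
  induction t with
  | zero =>
    intro n hn hle _
    exfalso
    have : 0 < ∏ i, n i := Finset.prod_pos (fun i _ => hn i)
    omega
  | succ t ih =>
    intro n hn hle w
    by_cases hap : AperiodicMD d q n w
    · exact ⟨n, fun _ => dvd_rfl, w, hap, pull_self n w⟩
    · rw [aperiodic_iff] at hap
      push_neg at hap
      obtain ⟨m, hm1, hm2, hm3⟩ := hap
      have hmpos : ∀ i, 0 < m i := fun i => Nat.pos_of_dvd_of_pos (hm1 i) (hn i)
      obtain ⟨u, hu⟩ := exists_pull_of_fix n m hn hm1 w hm3
      have hlt : (∏ i, m i) < ∏ i, n i := by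
        obtain ⟨i0, hi0⟩ : ∃ i, m i ≠ n i := by
          by_contra hcon
          push_neg at hcon
          exact hm2 (funext hcon)
        refine Finset.prod_lt_prod (fun i _ => hmpos i)
          (fun i _ => Nat.le_of_dvd (hn i) (hm1 i)) ⟨i0, Finset.mem_univ i0, ?_⟩
        exact lt_of_le_of_ne (Nat.le_of_dvd (hn i0) (hm1 i0)) hi0
      obtain ⟨f, hfd, v, hva, hvp⟩ := ih m hmpos (by omega) u
      exact ⟨f, fun i => (hfd i).trans (hm1 i), v, hva, by
        rw [← hu, ← hvp, pull_pull]⟩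

lemma fix_translate {n : Fin d → ℕ} (v : Word d q n) (g s : (i : Fin d) → ZMod (n i)) :
    Fix n (fun x => v (x + g)) s ↔ Fix n v s := by
  constructor
  · intro H
    funext p
    have := congrFun H (p - g)
    simp only at this
    rw [sub_add_cancel] at this
    rw [show p - g + s + g = p + s by ring] at this
    exact this
  · intro H
    funext p
    show v (p + s + g) = v (p + g)
    rw [show p + s + g = (p + g) + s by ring]
    exact congrFun H (p + g)

lemma aperiodic_translate {n : Fin d → ℕ} {v : Word d q n}
    (hv : AperiodicMD d q n v) (g : (i : Fin d) → ZMod (n i)) :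
    AperiodicMD d q n (fun x => v (x + g)) := by
  rw [aperiodic_iff] at hv ⊢
  intro m hm1 hm2 hfix
  exact hv m hm1 hm2 fun i => (fix_translate v g (sing n i (m i))).mp (hfix i)

lemma pull_resp (n f : Fin d → ℕ) (h : ∀ i, f i ∣ n i) (hf : ∀ i, 0 < f i) :
    ∀ v v', (transSetoid d q f).r v v' →
      (transSetoid d q n).r (pull n f h v) (pull n f h v') := by
  rintro v v' ⟨g, hg⟩
  refine ⟨sec n f g, ?_⟩
  funext p
  show v (proj n f h (p + sec n f g)) = v' (proj n f h p)
  rw [proj_add, proj_sec n f h hf]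
  exact congrFun hg (proj n f h p)

variable (d q) in
/-- Aperiodic necklaces of size `f`. -/
noncomputable def AC (f : Fin d → ℕ) : Type :=
  {c : Quotient (transSetoid d q f) //
    ∃ w : ((i : Fin d) → ZMod (f i)) → Fin q,
      Quotient.mk (transSetoid d q f) w = c ∧ AperiodicMD d q f w}

lemma finite_word (f : Fin d → ℕ) (hf : ∀ i, 0 < f i) : Finite (Word d q f) := by
  haveI : ∀ i, NeZero (f i) := fun i => ⟨(hf i).ne'⟩
  infer_instance

lemma finite_ac (f : Fin d → ℕ) (hf : ∀ i, 0 < f i) : Finite (AC d q f) := by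
  haveI := finite_word (q := q) f hf
  haveI : Finite (Quotient (transSetoid d q f)) := Quotient.finite _
  exact Subtype.finite

/-- First identity: `N(n) = ∑_{f ∣ n} L(f)`. -/
lemma main1 (n : Fin d → ℕ) (hn : ∀ i, 0 < n i) :
    nCount d q n = ∑ f ∈ Fintype.piFinset (fun i => (n i).divisors), lCount d q f := by
  classical
  set S := Fintype.piFinset (fun i => (n i).divisors) with hS
  have hmemS : ∀ f : Fin d → ℕ, f ∈ S → (∀ i, f i ∣ n i) ∧ (∀ i, 0 < f i) := by
    intro f hf
    rw [hS, Fintype.mem_piFinset] at hf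
    have h1 : ∀ i, f i ∣ n i := fun i => (Nat.mem_divisors.mp (hf i)).1
    exact ⟨h1, fun i => Nat.pos_of_dvd_of_pos (h1 i) (hn i)⟩
  let T := Σ f : {f : Fin d → ℕ // f ∈ S}, AC d q f.val
  let Φ : T → Quotient (transSetoid d q n) := fun x =>
    Quotient.map (pull n x.1.val (hmemS x.1.val x.1.2).1)
      (pull_resp n x.1.val (hmemS x.1.val x.1.2).1 (hmemS x.1.val x.1.2).2) x.2.val
  have hbij : Function.Bijective Φ := by
    constructor
    · rintro ⟨⟨f, hf⟩, c, hc⟩ ⟨⟨f', hf'⟩, c', hc'⟩ heq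
      obtain ⟨hfd, hfp⟩ := hmemS f hf
      obtain ⟨hfd', hfp'⟩ := hmemS f' hf'
      obtain ⟨v, hv1, hv2⟩ := hc
      obtain ⟨v', hv1', hv2'⟩ := hc'
      simp only [Φ, ← hv1, ← hv1', Quotient.map_mk, Quotient.eq] at heq
      obtain ⟨g, hg⟩ := heq
      set v2 : Word d q f := fun x => v (x + proj n f hfd g) with hv2def
      have h3 : pull n f hfd v2 = pull n f' hfd' v' := by
        funext p
        show v (proj n f hfd p + proj n f hfd g) = v' (proj n f' hfd' p)
        rw [← proj_add]
        exact congrFun hg p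
      have hv2a : AperiodicMD d q f v2 := aperiodic_translate hv2 _
      have hff' : f = f' := by
        funext i
        refine Nat.dvd_antisymm ?_ ?_
        · refine dvd_of_fix_sing f hfp v2 hv2a i (f' i) ?_
          have : Fix n (pull n f' hfd' v') (sing n i (f' i)) := by
            rw [fix_pull n f' hfd' hfp', proj_sing, sing_self]
            exact fix_zero _ _
          rw [← h3, fix_pull n f hfd hfp, proj_sing] at this
          exact this
        · refine dvd_of_fix_sing f' hfp' v' hv2' i (f i) ?_
          have : Fix n (pull n f hfd v2) (sing n i (f i)) := by
            rw [fix_pull n f hfd hfp, proj_sing, sing_self]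
            exact fix_zero _ _
          rw [h3, fix_pull n f' hfd' hfp', proj_sing] at this
          exact this
      subst hff'
      have hvv : v2 = v' := pull_inj n f hfd hfp h3
      have hcc : Quotient.mk (transSetoid d q f) v = Quotient.mk (transSetoid d q f) v' := by
        rw [Quotient.eq]
        exact hvv ▸ ⟨proj n f hfd g, rfl⟩
      refine Sigma.ext rfl ?_
      show HEq (⟨c, ⟨v, hv1, hv2⟩⟩ : AC d q f) (⟨c', ⟨v', hv1', hv2'⟩⟩ : AC d q f)
      refine heq_of_eq (Subtype.ext ?_)
      show c = c'
      rw [← hv1, ← hv1']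
      exact hcc
    · intro c
      induction c using Quotient.inductionOn with
      | h w =>
        obtain ⟨f, h, v, hva, hvp⟩ :=
          exists_aperiodic_pull (∏ i, n i) n hn le_rfl w
        have hfS : f ∈ S := by
          rw [hS, Fintype.mem_piFinset]
          exact fun i => Nat.mem_divisors.mpr ⟨h i, (hn i).ne'⟩
        refine ⟨⟨⟨f, hfS⟩, ⟨Quotient.mk _ v, v, rfl, hva⟩⟩, ?_⟩
        show Quotient.map _ _ (Quotient.mk _ v) = _
        rw [Quotient.map_mk]
        exact congrArg (Quotient.mk _) hvp
  haveI : ∀ f : {f : Fin d → ℕ // f ∈ S}, Finite (AC d q f.val) :=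
    fun f => finite_ac f.val (hmemS f.val f.2).2
  haveI : Finite T := by infer_instance
  have hcard : Nat.card T = Nat.card (Quotient (transSetoid d q n)) :=
    Nat.card_eq_of_bijective Φ hbij
  haveI : ∀ f : {f : Fin d → ℕ // f ∈ S}, Fintype (AC d q f.val) :=
    fun f => Fintype.ofFinite _
  have hsig : Nat.card T = ∑ f : {f : Fin d → ℕ // f ∈ S}, Nat.card (AC d q f.val) := by
    rw [Nat.card_eq_fintype_card, Fintype.card_sigma]
    exact Finset.sum_congr rfl fun f _ => (Nat.card_eq_fintype_card).symm
  have hl : ∀ f : Fin d → ℕ, lCount d q f = Nat.card (AC d q f) := fun f => rfl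
  rw [nCount, ← hcard, hsig]
  rw [← Finset.sum_coe_sort S (lCount d q)]
  exact Finset.sum_congr rfl fun f _ => hl f.val

lemma moebius_filter_sum {n g : ℕ} (hn : 0 < n) (hg : g ∣ n) :
    (∑ x ∈ n.divisors.filter (fun x => g ∣ x), ArithmeticFunction.moebius (n / x))
      = if g = n then 1 else 0 := by
  have hg0 : 0 < g := Nat.pos_of_dvd_of_pos hg hn
  set k := n / g with hk
  have hgk : g * k = n := Nat.mul_div_cancel' hg
  have hk0 : 0 < k := Nat.div_pos (Nat.le_of_dvd hn hg) hg0
  have step1 : (∑ x ∈ n.divisors.filter (fun x => g ∣ x), ArithmeticFunction.moebius (n / x))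
      = ∑ y ∈ k.divisors, ArithmeticFunction.moebius (k / y) := by
    refine Finset.sum_nbij' (fun x => x / g) (fun y => g * y) ?_ ?_ ?_ ?_ ?_
    · intro x hx
      rw [Finset.mem_filter, Nat.mem_divisors] at hx
      obtain ⟨⟨hxn, _⟩, hgx⟩ := hx
      rw [Nat.mem_divisors]
      refine ⟨?_, hk0.ne'⟩
      have h2 : g * (x / g) ∣ g * k := by
        rw [Nat.mul_div_cancel' hgx, hgk]; exact hxn
      exact (mul_dvd_mul_iff_left hg0.ne').mp h2
    · intro y hy
      rw [Nat.mem_divisors] at hy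
      rw [Finset.mem_filter, Nat.mem_divisors]
      exact ⟨⟨hgk ▸ mul_dvd_mul_left g hy.1, hn.ne'⟩, dvd_mul_right g y⟩
    · intro x hx
      rw [Finset.mem_filter] at hx
      exact Nat.mul_div_cancel' hx.2
    · intro y _
      exact Nat.mul_div_cancel_left y hg0
    · intro x hx
      rw [Finset.mem_filter, Nat.mem_divisors] at hx
      obtain ⟨⟨hxn, _⟩, hgx⟩ := hx
      congr 1
      conv_lhs => rw [← hgk, ← Nat.mul_div_cancel' hgx]
      rw [Nat.mul_div_mul_left _ _ hg0]
  rw [step1, Nat.sum_div_divisors]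
  have h2 : (∑ y ∈ k.divisors, ArithmeticFunction.moebius y)
      = if k = 1 then 1 else 0 := by
    rw [← ArithmeticFunction.coe_mul_zeta_apply, ArithmeticFunction.moebius_mul_coe_zeta,
      ArithmeticFunction.one_apply]
  rw [h2]
  by_cases hgn : g = n
  · subst hgn
    rw [if_pos rfl, if_pos (Nat.div_self hn)]
  · have hk1 : k ≠ 1 := fun h1 => hgn (by rw [← hgk, h1, mul_one])
    rw [if_neg hk1, if_neg hgn]

/-- Second identity: Möbius inversion. -/
lemma main2 (n : Fin d → ℕ) (hn : ∀ i, 0 < n i) :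
    (lCount d q n : ℤ) = ∑ f ∈ Fintype.piFinset (fun i => (n i).divisors),
        (∏ i, ArithmeticFunction.moebius (n i / f i)) * (nCount d q f : ℤ) := by
  classical
  set S := Fintype.piFinset (fun i => (n i).divisors) with hS
  have hmemS : ∀ f : Fin d → ℕ, f ∈ S ↔ ∀ i, f i ∣ n i ∧ n i ≠ 0 := by
    intro f
    rw [hS, Fintype.mem_piFinset]
    simp only [Nat.mem_divisors]
  have step1 : ∀ f ∈ S, (nCount d q f : ℤ)
      = ∑ g ∈ S, if (∀ i, g i ∣ f i) then (lCount d q g : ℤ) else 0 := by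
    intro f hf
    have hfd : ∀ i, f i ∣ n i := fun i => ((hmemS f).mp hf i).1
    have hfp : ∀ i, 0 < f i := fun i => Nat.pos_of_dvd_of_pos (hfd i) (hn i)
    rw [main1 f hfp]
    have hset : Fintype.piFinset (fun i => (f i).divisors)
        = S.filter (fun g => ∀ i, g i ∣ f i) := by
      ext g
      rw [Fintype.mem_piFinset, Finset.mem_filter, hmemS]
      constructor
      · intro hgf
        refine ⟨fun i => ⟨(Nat.mem_divisors.mp (hgf i)).1.trans (hfd i), (hn i).ne'⟩,
          fun i => (Nat.mem_divisors.mp (hgf i)).1⟩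
      · rintro ⟨_, hgf⟩ i
        exact Nat.mem_divisors.mpr ⟨hgf i, (hfp i).ne'⟩
    rw [hset]
    push_cast
    rw [Finset.sum_filter]
  have main : ∑ f ∈ S, (∏ i, ArithmeticFunction.moebius (n i / f i)) * (nCount d q f : ℤ)
      = (lCount d q n : ℤ) := by
    calc ∑ f ∈ S, (∏ i, ArithmeticFunction.moebius (n i / f i)) * (nCount d q f : ℤ)
        = ∑ f ∈ S, ∑ g ∈ S, (if (∀ i, g i ∣ f i)
            then (∏ i, ArithmeticFunction.moebius (n i / f i)) * (lCount d q g : ℤ) else 0) := by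
          refine Finset.sum_congr rfl fun f hf => ?_
          rw [step1 f hf, Finset.mul_sum]
          exact Finset.sum_congr rfl fun g _ => by rw [mul_ite, mul_zero]
      _ = ∑ g ∈ S, ∑ f ∈ S, (if (∀ i, g i ∣ f i)
            then (∏ i, ArithmeticFunction.moebius (n i / f i)) * (lCount d q g : ℤ) else 0) :=
          Finset.sum_comm
      _ = ∑ g ∈ S, (∏ i, (if g i = n i then 1 else 0 : ℤ)) * (lCount d q g : ℤ) := by
          refine Finset.sum_congr rfl fun g hg => ?_
          have hgd : ∀ i, g i ∣ n i := fun i => ((hmemS g).mp hg i).1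
          have hset2 : S.filter (fun f => ∀ i, g i ∣ f i)
              = Fintype.piFinset (fun i => (n i).divisors.filter (fun x => g i ∣ x)) := by
            ext f
            rw [Finset.mem_filter, hS, Fintype.mem_piFinset, Fintype.mem_piFinset]
            constructor
            · rintro ⟨h1, h2⟩ i
              rw [Finset.mem_filter]
              exact ⟨h1 i, h2 i⟩
            · intro h1
              refine ⟨fun i => (Finset.mem_filter.mp (h1 i)).1,
                fun i => (Finset.mem_filter.mp (h1 i)).2⟩
          have hps := Finset.prod_univ_sum (fun i => (n i).divisors.filter (fun x => g i ∣ x))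
            (fun i x => ArithmeticFunction.moebius (n i / x))
          rw [← Finset.sum_filter, ← Finset.sum_mul, hset2, ← hps]
          congr 1
          exact Finset.prod_congr rfl fun i _ => moebius_filter_sum (hn i) (hgd i)
      _ = ∑ g ∈ S, (if g = n then (lCount d q g : ℤ) else 0) := by
          refine Finset.sum_congr rfl fun g _ => ?_
          by_cases hgn : g = n
          · subst hgn
            rw [if_pos rfl]
            have : ∀ i ∈ Finset.univ, (if g i = g i then 1 else 0 : ℤ) = 1 :=
              fun i _ => if_pos rfl
            rw [Finset.prod_congr rfl this, Finset.prod_const_one, one_mul]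
          · obtain ⟨i0, hi0⟩ : ∃ i, g i ≠ n i := by
              by_contra hcon
              push_neg at hcon
              exact hgn (funext hcon)
            rw [Finset.prod_eq_zero (Finset.mem_univ i0)
              (show (if g i0 = n i0 then (1:ℤ) else 0) = 0 from if_neg hi0), zero_mul, if_neg hgn]
      _ = (lCount d q n : ℤ) := by
          rw [Finset.sum_ite_eq' S n (fun g => (lCount d q g : ℤ))]
          rw [if_pos ((hmemS n).mpr fun i => ⟨dvd_rfl, (hn i).ne'⟩)]
  exact main.symm

end MDNL

/-- `N(n) = ∑_{f_1 ∣ n_1} ⋯ ∑_{f_d ∣ n_d} L(f)`, and by Möbius inversion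
`L(n) = ∑_{f_1 ∣ n_1} μ(n_1/f_1) ⋯ ∑_{f_d ∣ n_d} μ(n_d/f_d) N(f)`. -/
theorem multidim_necklace_lyndon_relation (d q : ℕ) (n : Fin d → ℕ) (hn : ∀ i, 0 < n i) :
    (nCount d q n = ∑ f ∈ Fintype.piFinset (fun i => (n i).divisors), lCount d q f) ∧
      ((lCount d q n : ℤ) = ∑ f ∈ Fintype.piFinset (fun i => (n i).divisors),
        (∏ i, ArithmeticFunction.moebius (n i / f i)) * (nCount d q f : ℤ)) := by
  exact ⟨MDNL.main1 n hn, MDNL.main2 n hn⟩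
end

section
/- A word w of length n over an ordered alphabet with maximal symbol q is a prefix of the canonical (lexicographically least rotation) representative of some necklace of length n + m for some m ≥ 0 if and only if for every i with 1 ≤ i ≤ n, the prefix w_1…w_i is lexicographically less than or equal to the suffix w_{n-i+1}…w_n. -/
private lemma lexExt {α : Type*} [LT α] : ∀ {a b : List α}, a.length = b.length →
    List.Lex (· < ·) a b → ∀ (x y : List α), List.Lex (· < ·) (a ++ x) (b ++ y)
  | _, _, hlen, .nil, _, _ => by simp at hlen
  | _, _, _, .rel h, _, _ => .rel h
  | _, _, hlen, .cons h, x, y => .cons (lexExt (by simpa using hlen) h x y)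

private lemma lex_of_append_left {α : Type*} [Preorder α] :
    ∀ (p : List α) {a b : List α},
      List.Lex (· < ·) (p ++ a) (p ++ b) → List.Lex (· < ·) a b
  | [], _, _, h => h
  | c :: p, a, b, h => by
    cases h with
    | rel h => exact absurd h (lt_irrefl c)
    | cons h => exact lex_of_append_left p h

private lemma lex_trichot {α : Type*} [LinearOrder α] (a b : List α) :
    List.Lex (· < ·) a b ∨ a = b ∨ List.Lex (· < ·) b a :=
  trichotomous_of (List.Lex (· < ·)) a b

private lemma lex_asymm' {α : Type*} [LinearOrder α] {a b : List α}
    (h : List.Lex (· < ·) a b) : ¬ List.Lex (· < ·) b a := asymm h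

private lemma lex_irrefl' {α : Type*} [LinearOrder α] (a : List α) :
    ¬ List.Lex (· < ·) a a := fun h => (lex_asymm' h) h

private lemma not_lex_replicate_top {α : Type*} [Preorder α] (top : α)
    (htop : ∀ x : α, x ≤ top) :
    ∀ (k : ℕ) (l : List α), l.length ≤ k →
      ¬ List.Lex (· < ·) (List.replicate k top) l := by
  intro k
  induction k with
  | zero =>
    intro l hlen h
    have : l = [] := List.eq_nil_of_length_eq_zero (by omega)
    subst this
    cases h
  | succ k ih =>
    intro l hlen h
    cases l with
    | nil => cases h
    | cons c t =>
      rw [List.replicate_succ] at h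
      cases h with
      | rel h => exact absurd h (not_lt_of_ge (htop c))
      | cons h => exact ih t (by simpa using hlen) h

private lemma all_top_of_period {q n r : ℕ} (top : Fin q) (w : List (Fin q))
    (hl : w.length = n) (hr1 : 1 ≤ r) (hrn : r < n)
    (hEq : w.take (n - r) = w.drop r)
    (hTop : w.drop (n - r) = List.replicate r top) :
    w = List.replicate n top := by
  have key : ∀ d j, (hj : j < n) → n - j ≤ d → w[j]'(by omega) = top := by
    intro d
    induction d with
    | zero => intro j hj hd; omega
    | succ d ih =>
      intro j hj hd
      by_cases hcase : n - r ≤ j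
      · have h1 : j - (n - r) < (w.drop (n - r)).length := by
          simp [hl]; omega
        have e : w[j]'(by omega) = (w.drop (n - r))[j - (n - r)]'h1 := by
          rw [List.getElem_drop]; congr 1; omega
        rw [e]
        simp [hTop]
      · have h1 : j < (w.take (n - r)).length := by simp [hl]; omega
        have e : w[j]'(by omega) = (w.take (n - r))[j]'h1 := by
          rw [List.getElem_take]
        rw [e]
        have h2 : j < (w.drop r).length := by simp [hl]; omega
        have e2 : (w.take (n - r))[j]'h1 = (w.drop r)[j]'h2 := by
          congr 1
        rw [e2, List.getElem_drop]
        exact ih (r + j) (by omega) (by omega)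
  apply List.ext_getElem (by simp [hl])
  intro i h1 h2
  rw [List.getElem_replicate]
  exact key n i (by omega) (by omega)

private lemma all_top_of_head {q n : ℕ} (top : Fin q)
    (htop : ∀ x : Fin q, x ≤ top) (w' : List (Fin q))
    (hl : (top :: w').length = n)
    (hcond : ∀ i : ℕ, 1 ≤ i → i ≤ n →
      ¬ List.Lex (· < ·) ((top :: w').drop (n - i)) ((top :: w').take i)) :
    (top :: w') = List.replicate n top := by
  have hl' : w'.length + 1 = n := by simpa using hl
  have claim : ∀ i, i ≤ n → (top :: w').drop (n - i) = List.replicate i top := by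
    intro i
    induction i with
    | zero =>
      intro _
      exact List.drop_eq_nil_of_le (by simp; omega)
    | succ i ih =>
      intro hin
      have hIH := ih (by omega)
      have hlt : n - (i + 1) < (top :: w').length := by simp; omega
      have h3 : n - (i + 1) + 1 = n - i := by omega
      have e : (top :: w').drop (n - (i + 1))
          = (top :: w')[n - (i + 1)] :: (top :: w').drop (n - i) := by
        rw [List.drop_eq_getElem_cons hlt, h3]
      have hc := hcond (i + 1) (by omega) hin
      rw [e, hIH, List.take_succ_cons] at hc
      have hgt : (top :: w')[n - (i + 1)]'hlt = top := by
        by_contra hne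
        exact hc (List.Lex.rel (lt_of_le_of_ne (htop _) hne))
      rw [e, hIH, hgt, List.replicate_succ]
  have := claim n le_rfl
  simpa using this

/-- A word `w` of length `n ≥ 1` over the ordered alphabet `Fin q` is a prefix
of the canonical (lexicographically least rotation) representative of some
necklace of length `n + m` for some `m ≥ 0` iff for every `1 ≤ i ≤ n` the
prefix `w_1…w_i` is lexicographically ≤ the suffix `w_{n-i+1}…w_n`. -/
theorem prenecklace_characterization (q n : ℕ) (w : List (Fin q))
    (hl : w.length = n) (hn : 0 < n) :
    (∃ (m : ℕ) (v : List (Fin q)), v.length = n + m ∧ w <+: v ∧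
        ∀ r : ℕ, ¬ List.Lex (· < ·) (v.rotate r) v) ↔
      ∀ i : ℕ, 1 ≤ i → i ≤ n → ¬ List.Lex (· < ·) (w.drop (n - i)) (w.take i) := by
  constructor
  · -- forward direction
    rintro ⟨m, v, hv, ⟨t, rfl⟩, hrot⟩ i h1 hi hlex
    have hr : n - i ≤ (w ++ t).length := by simp [hl]; omega
    apply hrot (n - i)
    rw [List.rotate_eq_drop_append_take hr]
    have h1' : List.drop (n - i) (w ++ t) = List.drop (n - i) w ++ t := by
      rw [List.drop_append]
      congr 1
      rw [hl, Nat.sub_eq_zero_of_le (by omega : n - i ≤ n), List.drop_zero]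
    have e1 : List.drop (n - i) (w ++ t) ++ List.take (n - i) (w ++ t)
        = List.drop (n - i) w ++ (t ++ List.take (n - i) (w ++ t)) := by
      rw [h1', List.append_assoc]
    have e2 : w ++ t = List.take i w ++ (List.drop i w ++ t) := by
      rw [← List.append_assoc, List.take_append_drop]
    rw [e1]
    conv => rw [e2]
    have hlen : (List.drop (n - i) w).length = (List.take i w).length := by
      simp [hl]; omega
    exact lexExt hlen hlex _ _
  · -- backward direction
    intro hcond
    rcases q with _ | q'
    · have hne : w ≠ [] := by
        intro h; rw [h] at hl; simp at hl; omega
      exact (w.head hne).elim0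
    have htop : ∀ x : Fin (q' + 1), x ≤ Fin.last q' := Fin.le_last
    obtain ⟨a, w', rfl⟩ : ∃ a w'', w = a :: w'' := by
      cases w with
      | nil => simp at hl; omega
      | cons a w' => exact ⟨a, w', rfl⟩
    by_cases hwt : a :: w' = List.replicate n (Fin.last q')
    · refine ⟨0, a :: w', by simp [hl], List.prefix_refl _, ?_⟩
      intro r
      rw [hwt, List.rotate_replicate]
      exact lex_irrefl' _
    · have ha : a < Fin.last q' := by
        refine lt_of_le_of_ne (htop a) (fun he => hwt ?_)
        subst he
        exact all_top_of_head (Fin.last q') htop w' hl hcond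
      refine ⟨n, (a :: w') ++ List.replicate n (Fin.last q'),
        by rw [List.length_append, List.length_replicate, hl], List.prefix_append _ _, ?_⟩
      intro r
      obtain ⟨v, hv⟩ : ∃ v, v = (a :: w') ++ List.replicate n (Fin.last q') :=
        ⟨_, rfl⟩
      rw [← hv]
      have hvl : v.length = n + n := by
        rw [hv, List.length_append, List.length_replicate, hl]
      rw [← List.rotate_mod]
      obtain ⟨s, hs⟩ : ∃ s, s = r % v.length := ⟨_, rfl⟩
      rw [← hs]
      have hslt : s < n + n := by
        rw [hs, hvl]; exact Nat.mod_lt _ (by omega)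
      have hdropw : ∀ k, k ≤ n → List.drop k v
          = List.drop k (a :: w') ++ List.replicate n (Fin.last q') := by
        intro k hk
        rw [hv, List.drop_append, hl,
          Nat.sub_eq_zero_of_le hk, List.drop_zero]
      have htakew : ∀ k, k ≤ n → List.take k v = List.take k (a :: w') := by
        intro k hk
        rw [hv, List.take_append, hl,
          Nat.sub_eq_zero_of_le hk, List.take_zero, List.append_nil]
      rcases Nat.lt_or_ge s 1 with hs0 | hs1
      · interval_cases s
        rw [List.rotate_zero]
        exact lex_irrefl' _
      rcases Nat.lt_or_ge s n with hsn | hsn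
      · -- 1 ≤ s < n
        have hrot : v.rotate s = List.drop s (a :: w') ++
            (List.replicate n (Fin.last q') ++ List.take s (a :: w')) := by
          rw [List.rotate_eq_drop_append_take (by omega),
            hdropw s (by omega), htakew s (by omega), List.append_assoc]
        have hvshape : v = List.take (n - s) (a :: w') ++
            (List.drop (n - s) (a :: w') ++ List.replicate n (Fin.last q')) := by
          rw [hv, ← List.append_assoc, List.take_append_drop]
        have hclen : (List.take (n - s) (a :: w')).length
            = (List.drop s (a :: w')).length := by
          rw [List.length_take, List.length_drop, hl]; omega
        have hc := hcond (n - s) (by omega) (by omega)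
        rw [(by omega : n - (n - s) = s)] at hc
        rcases lex_trichot (List.take (n - s) (a :: w'))
            (List.drop s (a :: w')) with hstrict | heq | hgt
        · have : List.Lex (· < ·) v (v.rotate s) := by
            rw [hrot, hvshape]
            exact lexExt hclen hstrict _ _
          exact lex_asymm' this
        · intro hcon
          rw [hrot, ← heq, hvshape] at hcon
          have hcon2 := lex_of_append_left _ hcon
          have hdlen : (List.drop (n - s) (a :: w')).length = s := by
            rw [List.length_drop, hl]; omega
          rcases lex_trichot (List.drop (n - s) (a :: w'))
              (List.replicate s (Fin.last q')) with hst | he | hg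
          · have hx : List.Lex (· < ·)
                (List.drop (n - s) (a :: w') ++ List.replicate n (Fin.last q'))
                (List.replicate s (Fin.last q') ++
                  (List.replicate (n - s) (Fin.last q')
                    ++ List.take s (a :: w'))) :=
              lexExt (by simp [hdlen]) hst _ _
            rw [← List.append_assoc, ← List.replicate_add,
              (by omega : s + (n - s) = n)] at hx
            exact (lex_asymm' hx) hcon2
          · exact hwt (all_top_of_period (Fin.last q') (a :: w') hl hs1 hsn heq he)
          · exact not_lex_replicate_top (Fin.last q') htop s _ (by omega) hg
        · exact absurd hgt hc
      · -- n ≤ s < n + n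
        have hd : List.drop s v = List.replicate (n - (s - n)) (Fin.last q') := by
          rw [hv, List.drop_append, hl, List.drop_replicate,
            List.drop_eq_nil_of_le (le_of_eq_of_le hl hsn), List.nil_append]
        obtain ⟨k, hk⟩ : ∃ k, n - (s - n) = k + 1 := ⟨n - (s - n) - 1, by omega⟩
        rw [List.rotate_eq_drop_append_take (by omega), hd, hk,
          List.replicate_succ, List.cons_append, hv, List.cons_append]
        intro hcon
        cases hcon with
        | rel h => exact absurd h (asymm ha)
        | cons h => exact absurd ha (lt_irrefl (Fin.last q'))
end

section
/- Let w be a 1D prenecklace of length n−1 over the ordered alphabet {1,…,q}, and let p = |lyn(w)| be the length of the longest prefix of w that is a Lyndon word. Then w · b is a prenecklace of length n if and only if w_{n−p} ≤ b ≤ q; moreover |lyn(w·b)| = p if b = w_{n−p} and |lyn(w·b)| = n if b > w_{n−p}. -/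
/-- A word `u` over the ordered alphabet `Fin q` is Lyndon if it is nonempty
and strictly lexicographically smaller than all its proper non-trivial rotations. -/
def IsLyndon (q : ℕ) (u : List (Fin q)) : Prop :=
  u ≠ [] ∧ ∀ r : ℕ, 0 < r → r < u.length → List.Lex (· < ·) u (u.rotate r)

/-- A word is a prenecklace if it is a prefix of the canonical representative
(the lexicographically least rotation) of some necklace, i.e. of some word
that is ≤ all of its rotations. -/
def IsPrenecklace (q : ℕ) (w : List (Fin q)) : Prop :=
  ∃ v : List (Fin q), w <+: v ∧ v ≠ [] ∧ ∀ r : ℕ, ¬ List.Lex (· < ·) (v.rotate r) v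

/-- `p` is the length of `lyn v`, the longest prefix of `v` that is Lyndon. -/
def IsLynLen (q : ℕ) (v : List (Fin q)) (p : ℕ) : Prop :=
  IsLyndon q (v.take p) ∧ p ≤ v.length ∧
    ∀ p' : ℕ, p < p' → p' ≤ v.length → ¬ IsLyndon q (v.take p')

namespace PreNeck
open List

variable {q : ℕ}

lemma lex_asymm {x y : List (Fin q)} (h : List.Lex (· < ·) x y) :
    ¬ List.Lex (· < ·) y x :=
  List.lex_asymm (fun h1 h2 => lt_asymm h1 h2) h

lemma lex_irrefl (x : List (Fin q)) : ¬ List.Lex (· < ·) x x :=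
  fun h => lex_asymm h h

lemma lex_intro (d : Fin q) : ∀ {x y : List (Fin q)} {i : ℕ}, i < x.length → i < y.length →
    (∀ j < i, x.getD j d = y.getD j d) → x.getD i d < y.getD i d →
    List.Lex (· < ·) x y := by
  intro x y i
  induction i generalizing x y with
  | zero =>
    intro hx hy _ hlt
    match x, y with
    | a :: x', b :: y' =>
      simp only [getD_cons_zero] at hlt
      exact List.Lex.rel hlt
  | succ n ih =>
    intro hx hy hpre hlt
    match x, y with
    | a :: x', b :: y' =>
      have h0 : a = b := by simpa using hpre 0 (Nat.succ_pos _)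
      subst h0
      refine List.Lex.cons (ih (by simpa using hx) (by simpa using hy) ?_ (by simpa using hlt))
      intro j hj
      simpa using hpre (j+1) (by omega)

lemma lex_elim (d : Fin q) : ∀ {x y : List (Fin q)}, x.length = y.length →
    List.Lex (· < ·) x y →
    ∃ i < x.length, (∀ j < i, x.getD j d = y.getD j d) ∧ x.getD i d < y.getD i d := by
  intro x
  induction x with
  | nil => intro y hlen h; cases y; · cases h
           · simp at hlen
  | cons a x' ih =>
    intro y hlen h
    match y with
    | [] => simp at hlen
    | b :: y' =>
      cases h with
      | rel hab => exact ⟨0, by simp, by simp, by simpa using hab⟩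
      | cons h' =>
        obtain ⟨i, hi, h1, h2⟩ := ih (by simpa using hlen) h'
        refine ⟨i+1, by simpa using hi, ?_, by simpa using h2⟩
        intro j hj
        match j with
        | 0 => simp
        | j+1 => simpa using h1 j (by omega)

lemma lex_append_left_cancel : ∀ {c x y : List (Fin q)},
    List.Lex (· < ·) (c ++ x) (c ++ y) → List.Lex (· < ·) x y := by
  intro c
  induction c with
  | nil => intro x y h; exact h
  | cons a c' ih =>
    intro x y h
    cases h with
    | rel hab => exact absurd hab (lt_irrefl _)
    | cons h' => exact ih h'

lemma lex_append_same (s : List (Fin q)) : ∀ {x y : List (Fin q)}, x.length = y.length →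
    List.Lex (· < ·) x y → List.Lex (· < ·) (x ++ s) (y ++ s) := by
  intro x
  induction x with
  | nil => intro y hlen h; cases y; · cases h
           · simp at hlen
  | cons a x' ih =>
    intro y hlen h
    match y with
    | b :: y' =>
      cases h with
      | rel hab => exact List.Lex.rel hab
      | cons h' => exact List.Lex.cons (ih (by simpa using hlen) h')

lemma getD_prefix (d : Fin q) {w v : List (Fin q)} (h : w <+: v) {i : ℕ}
    (hi : i < w.length) : v.getD i d = w.getD i d := by
  obtain ⟨t, rfl⟩ := h
  exact List.getD_append _ _ _ _ hi

lemma getD_rotate (d : Fin q) (l : List (Fin q)) (r : ℕ) {i : ℕ} (hi : i < l.length) :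
    (l.rotate r).getD i d = l.getD ((i + r) % l.length) d := by
  have h1 : i < (l.rotate r).length := by rwa [List.length_rotate]
  rw [List.getD_eq_getElem _ _ h1, List.getD_eq_getElem _ _ (Nat.mod_lt _ (by omega)),
    List.getElem_rotate]

lemma ext_getD (d : Fin q) {x y : List (Fin q)} (hlen : x.length = y.length)
    (h : ∀ i < x.length, x.getD i d = y.getD i d) : x = y := by
  apply List.ext_getElem hlen
  intro n h1 h2
  rw [← List.getD_eq_getElem x d h1, ← List.getD_eq_getElem y d h2]
  exact h n h1

lemma getD_take (d : Fin q) {l : List (Fin q)} {n i : ℕ} (h : i < n) (hi : i < l.length) :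
    (l.take n).getD i d = l.getD i d :=
  (getD_prefix d (List.take_prefix n l) (by simp; omega)).symm

lemma getD_drop (d : Fin q) {l : List (Fin q)} {n i : ℕ} (hi : n + i < l.length) :
    (l.drop n).getD i d = l.getD (n + i) d := by
  rw [List.getD_eq_getElem _ _ (by simp; omega), List.getD_eq_getElem _ _ hi,
    List.getElem_drop]

/-- A Lyndon word has no period shorter than its length. -/
lemma lyndon_aperiodic (d : Fin q) {z : List (Fin q)} (hz : IsLyndon q z) {dd : ℕ}
    (h0 : 0 < dd) (h1 : dd < z.length)
    (hper : ∀ i, i + dd < z.length → z.getD i d = z.getD (i + dd) d) : False := by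
  set L := z.length with hL
  have hs : z.drop dd = z.take (L - dd) := by
    apply ext_getD d
    · simp [hL]
    · intro i hi
      have hi' : i < L - dd := by simpa [hL] using hi
      rw [getD_drop d (by omega), getD_take d (by omega) (by omega), Nat.add_comm dd i]
      exact (hper i (by omega)).symm
  have hz1 : z = z.take dd ++ z.drop dd := (List.take_append_drop _ _).symm
  have hz2 : z = z.drop dd ++ z.drop (L - dd) := by
    conv_lhs => rw [← List.take_append_drop (L - dd) z]
    rw [hs]
  have hrot1 : z.rotate dd = z.drop dd ++ z.take dd :=
    List.rotate_eq_drop_append_take (by omega)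
  have hrot2 : z.rotate (L - dd) = z.drop (L - dd) ++ z.drop dd := by
    rw [List.rotate_eq_drop_append_take (by omega : L - dd ≤ z.length), hs]
  have hyx : List.Lex (· < ·) (z.drop (L - dd)) (z.take dd) := by
    apply lex_append_left_cancel (c := z.drop dd)
    rw [← hz2, ← hrot1]
    exact hz.2 dd h0 h1
  have hlen' : (z.drop (L - dd)).length = (z.take dd).length := by
    simp [hL]; omega
  have hcontra : List.Lex (· < ·) z (z.drop (L - dd) ++ z.drop dd) := by
    rw [← hrot2]
    exact hz.2 (L - dd) (by omega) (by omega)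
  have hthis : List.Lex (· < ·) (z.drop (L - dd) ++ z.drop dd) (z.take dd ++ z.drop dd) :=
    lex_append_same _ hlen' hyx
  rw [← hz1] at hthis
  exact lex_asymm hcontra hthis

lemma pow_length (u : List (Fin q)) (K : ℕ) :
    (List.flatten (List.replicate K u)).length = K * u.length := by
  induction K with
  | zero => simp
  | succ K ih => simp [List.replicate_succ, ih]; ring

lemma pow_getD (d : Fin q) (u : List (Fin q)) (hu0 : u ≠ []) :
    ∀ (K : ℕ) {i : ℕ}, i < K * u.length →
      (List.flatten (List.replicate K u)).getD i d = u.getD (i % u.length) d := by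
  have hp0 : 0 < u.length := List.length_pos_iff.mpr hu0
  intro K
  induction K with
  | zero => intro i hi; omega
  | succ K ih =>
    intro i hi
    have hsucc : (K+1) * u.length = K * u.length + u.length := by ring
    rw [List.replicate_succ, List.flatten_cons]
    rcases Nat.lt_or_ge i u.length with h | h
    · rw [List.getD_append _ _ _ _ h, Nat.mod_eq_of_lt h]
    · rw [List.getD_append_right _ _ _ _ h, ih (by omega)]
      congr 1
      conv_rhs => rw [← Nat.sub_add_cancel h]
      rw [Nat.add_mod_right]

/-- A word that is periodic with Lyndon period `u` and has length a multiple of `|u|`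
is minimal among its rotations. -/
lemma min_rotations (d : Fin q) {u v : List (Fin q)} (hu : IsLyndon q u)
    (hvlen : 0 < v.length) (hdvd : u.length ∣ v.length)
    (hper : ∀ i < v.length, v.getD i d = u.getD (i % u.length) d) :
    ∀ r : ℕ, ¬ List.Lex (· < ·) (v.rotate r) v := by
  have hp0 : 0 < u.length := List.length_pos_iff.mpr hu.1
  have hpv : u.length ≤ v.length := Nat.le_of_dvd hvlen hdvd
  intro r
  rw [← List.rotate_mod]
  have htL : r % v.length < v.length := Nat.mod_lt _ hvlen
  generalize ht : r % v.length = t at htL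
  have hrotD : ∀ i < v.length, (v.rotate t).getD i d = u.getD ((i + t) % u.length) d := by
    intro i hi
    rw [getD_rotate d v t hi, hper _ (Nat.mod_lt _ hvlen), Nat.mod_mod_of_dvd _ hdvd]
  rcases Nat.eq_zero_or_pos (t % u.length) with h0 | h0
  · have heq : v.rotate t = v := by
      apply ext_getD d (by rw [List.length_rotate])
      intro i hi
      rw [List.length_rotate] at hi
      rw [hrotD i hi, hper i hi]
      obtain ⟨c, rfl⟩ := Nat.dvd_of_mod_eq_zero h0
      rw [Nat.add_mul_mod_self_left]
    rw [heq]
    exact lex_irrefl v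
  · have hmm : ∀ j : ℕ, (j + t % u.length) % u.length = (j + t) % u.length := by
      intro j
      conv_lhs => rw [Nat.add_mod]
      conv_rhs => rw [Nat.add_mod]
      rw [Nat.mod_mod_of_dvd _ dvd_rfl]
    have htp : t % u.length < u.length := Nat.mod_lt _ hp0
    have hlyn : List.Lex (· < ·) u (u.rotate (t % u.length)) := hu.2 (t % u.length) h0 htp
    obtain ⟨i0, hi0, he, hlt⟩ := lex_elim d (by rw [List.length_rotate]) hlyn
    rw [getD_rotate d u (t % u.length) hi0, hmm] at hlt
    have key : List.Lex (· < ·) v (v.rotate t) := by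
      apply lex_intro d (i := i0) (by omega) (by rw [List.length_rotate]; omega)
      · intro j hj
        have hej := he j hj
        rw [getD_rotate d u (t % u.length) (by omega), hmm] at hej
        rw [hper j (by omega), hrotD j (by omega), Nat.mod_eq_of_lt (show j < u.length by omega)]
        exact hej
      · rw [hper i0 (by omega), hrotD i0 (by omega),
          Nat.mod_eq_of_lt (show i0 < u.length by omega)]
        exact hlt
    exact lex_asymm key

lemma not_pre (d : Fin q) {u w' : List (Fin q)} (hu : IsLyndon q u)
    (hm : u.length ≤ w'.length)
    (hper : ∀ i < w'.length, w'.getD i d = u.getD (i % u.length) d)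
    {b : Fin q} (hb : b < u.getD (w'.length % u.length) d) :
    ¬ IsPrenecklace q (w' ++ [b]) := by
  rintro ⟨v, hpre, hv0, hmin⟩
  have hp0 : 0 < u.length := List.length_pos_iff.mpr hu.1
  have hw'pre : w' <+: v := (List.prefix_append w' [b]).trans hpre
  have hvlen : w'.length + 1 ≤ v.length := by
    have := hpre.length_le
    simpa using this
  have hdm : u.length * (w'.length / u.length) + w'.length % u.length = w'.length :=
    Nat.div_add_mod _ _
  have hk1 : 1 ≤ w'.length / u.length := (Nat.one_le_div_iff hp0).mpr hm
  have hs : w'.length % u.length < u.length := Nat.mod_lt _ hp0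
  have hr1 : 1 ≤ u.length * (w'.length / u.length) := by
    have := Nat.mul_le_mul hp0 hk1
    omega
  apply hmin (u.length * (w'.length / u.length))
  apply lex_intro d (i := w'.length % u.length)
  · rw [List.length_rotate]; omega
  · omega
  · intro j hj
    rw [getD_rotate d v _ (by omega), Nat.mod_eq_of_lt (by omega),
      getD_prefix d hw'pre (show j + u.length * (w'.length / u.length) < w'.length by omega),
      hper _ (by omega), Nat.add_mul_mod_self_left,
      getD_prefix d hw'pre (show j < w'.length by omega), hper _ (by omega)]
  · rw [getD_rotate d v _ (by omega), Nat.mod_eq_of_lt (by omega),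
      show w'.length % u.length + u.length * (w'.length / u.length) = w'.length by omega,
      getD_prefix d hpre (show w'.length < (w' ++ [b]).length by simp),
      List.getD_append_right _ _ _ _ le_rfl, Nat.sub_self,
      getD_prefix d hw'pre (show w'.length % u.length < w'.length by omega),
      hper _ (by omega), Nat.mod_mod_of_dvd _ dvd_rfl]
    exact hb

lemma lyndon_ext (d : Fin q) {u w' : List (Fin q)} (hu : IsLyndon q u)
    (hm : u.length ≤ w'.length)
    (hper : ∀ i < w'.length, w'.getD i d = u.getD (i % u.length) d)
    {b : Fin q} (hb : u.getD (w'.length % u.length) d < b) :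
    IsLyndon q (w' ++ [b]) := by
  have hp0 : 0 < u.length := List.length_pos_iff.mpr hu.1
  refine ⟨by simp, ?_⟩
  intro r hr0 hrlen
  rw [List.length_append, List.length_singleton] at hrlen
  have hwlen : (w' ++ [b]).length = w'.length + 1 := by simp
  have hwD : ∀ i < w'.length, (w' ++ [b]).getD i d = u.getD (i % u.length) d := by
    intro i hi
    rw [List.getD_append _ _ _ _ hi]
    exact hper i hi
  have hwDm : (w' ++ [b]).getD w'.length d = b := by
    rw [List.getD_append_right _ _ _ _ le_rfl, Nat.sub_self]
    rfl
  have hrot : ∀ i, i + r ≤ w'.length →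
      ((w' ++ [b]).rotate r).getD i d = (w' ++ [b]).getD (i + r) d := by
    intro i hi
    rw [getD_rotate d _ r (by rw [hwlen]; omega), hwlen, Nat.mod_eq_of_lt (by omega)]
  rcases Nat.eq_zero_or_pos (r % u.length) with h0 | h0
  · obtain ⟨c, hc⟩ := Nat.dvd_of_mod_eq_zero h0
    apply lex_intro d (i := w'.length - r) (by rw [hwlen]; omega)
      (by rw [List.length_rotate, hwlen]; omega)
    · intro j hj
      rw [hwD j (by omega), hrot j (by omega), hwD (j + r) (by omega)]
      congr 1
      rw [hc, Nat.add_mul_mod_self_left]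
    · rw [hwD (w'.length - r) (by omega), hrot _ (by omega),
        Nat.sub_add_cancel (by omega), hwDm]
      have heq : (w'.length - r) % u.length = w'.length % u.length := by
        conv_rhs => rw [← Nat.sub_add_cancel (show r ≤ w'.length by omega), hc,
          Nat.add_mul_mod_self_left]
        rw [hc]
      rw [heq]
      exact hb
  · have hmm : ∀ j : ℕ, (j + r % u.length) % u.length = (j + r) % u.length := by
      intro j
      conv_lhs => rw [Nat.add_mod]
      conv_rhs => rw [Nat.add_mod]
      rw [Nat.mod_mod_of_dvd _ dvd_rfl]
    have htp : r % u.length < u.length := Nat.mod_lt _ hp0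
    have hlyn := hu.2 _ h0 htp
    obtain ⟨i0, hi0, he, hlt⟩ := lex_elim d (by rw [List.length_rotate]) hlyn
    rw [getD_rotate d u _ hi0, hmm] at hlt
    have he' : ∀ j < i0, u.getD (j % u.length) d = u.getD ((j + r) % u.length) d := by
      intro j hj
      have hej := he j hj
      rw [getD_rotate d u _ (by omega), hmm] at hej
      rw [Nat.mod_eq_of_lt (show j < u.length by omega)]
      exact hej
    rcases Nat.lt_or_ge i0 (w'.length - r) with hcase | hcase
    · apply lex_intro d (i := i0) (by rw [hwlen]; omega)
        (by rw [List.length_rotate, hwlen]; omega)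
      · intro j hj
        rw [hwD j (by omega), hrot j (by omega), hwD (j + r) (by omega)]
        exact he' j hj
      · rw [hwD i0 (by omega), hrot i0 (by omega), hwD (i0 + r) (by omega),
          Nat.mod_eq_of_lt (show i0 < u.length by omega)]
        exact hlt
    · apply lex_intro d (i := w'.length - r) (by rw [hwlen]; omega)
        (by rw [List.length_rotate, hwlen]; omega)
      · intro j hj
        rw [hwD j (by omega), hrot j (by omega), hwD (j + r) (by omega)]
        exact he' j (by omega)
      · rw [hwD (w'.length - r) (by omega), hrot _ (by omega),
          Nat.sub_add_cancel (by omega), hwDm]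
        rcases Nat.lt_or_ge (w'.length - r) i0 with h2 | h2
        · have h3 := he' (w'.length - r) h2
          rw [Nat.sub_add_cancel (by omega)] at h3
          rw [h3]
          exact hb
        · have hi0eq : w'.length - r = i0 := by omega
          rw [hi0eq, Nat.mod_eq_of_lt (show i0 < u.length by omega)]
          refine lt_trans ?_ hb
          have h3 : (i0 + r) % u.length = w'.length % u.length := by
            rw [← hi0eq, Nat.sub_add_cancel (by omega)]
          rw [← h3]
          exact hlt

lemma isLynLen_of_periodic (d : Fin q) {u w : List (Fin q)} (hu : IsLyndon q u)
    (hm : u.length ≤ w.length)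
    (hper : ∀ i < w.length, w.getD i d = u.getD (i % u.length) d) :
    IsLynLen q w u.length := by
  have hp0 : 0 < u.length := List.length_pos_iff.mpr hu.1
  have htake : w.take u.length = u := by
    apply ext_getD d (by simp; omega)
    intro i hi
    have hi' : i < u.length := by simp at hi; omega
    rw [getD_take d hi' (by omega), hper i (by omega), Nat.mod_eq_of_lt hi']
  refine ⟨by rw [htake]; exact hu, hm, ?_⟩
  intro p' hp' hp'le hlyn
  apply lyndon_aperiodic d hlyn (dd := u.length) hp0 (by simp; omega)
  intro i hilen
  have hlen' : (w.take p').length = p' := by simp; omega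
  rw [hlen'] at hilen
  rw [getD_take d (by omega) (by omega), getD_take d (by omega) (by omega),
    hper i (by omega), hper (i + u.length) (by omega), Nat.add_mod_right]

lemma lynlen_unique {w : List (Fin q)} {p1 p2 : ℕ} (h1 : IsLynLen q w p1)
    (h2 : IsLynLen q w p2) : p1 = p2 := by
  by_contra hne
  rcases Nat.lt_or_ge p1 p2 with h | h
  · exact h1.2.2 p2 h h2.2.1 h2.1
  · exact h2.2.2 p1 (by omega) h1.2.1 h1.1

lemma exists_lynlen {w : List (Fin q)} (hw : w ≠ []) : ∃ p, IsLynLen q w p := by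
  classical
  have h1 : 0 < w.length := List.length_pos_iff.mpr hw
  have hP1 : IsLyndon q (w.take 1) := by
    constructor
    · exact List.length_pos_iff.mp (by simp; omega)
    · intro r hr0 hrlen
      have h2 : (w.take 1).length ≤ 1 := by simp
      omega
  refine ⟨Nat.findGreatest (fun t => IsLyndon q (w.take t)) w.length,
    Nat.findGreatest_spec (P := fun t => IsLyndon q (w.take t)) h1 hP1,
    Nat.findGreatest_le _, ?_⟩
  intro p' hlt hle
  exact Nat.findGreatest_is_greatest (P := fun t => IsLyndon q (w.take t)) hlt hle

lemma pre_periodic (d : Fin q) : ∀ (N : ℕ) (w : List (Fin q)), w.length ≤ N →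
    IsPrenecklace q w → ∀ p, IsLynLen q w p →
    ∀ i < w.length, w.getD i d = (w.take p).getD (i % p) d := by
  intro N
  induction N with
  | zero => intro w hlen _ p _ i hi; omega
  | succ N ih =>
    intro w hlen hpre p hp i hi
    rcases Nat.lt_or_ge w.length (N + 1) with hsm | hbig
    · exact ih w (by omega) hpre p hp i hi
    have hwlen : w.length = N + 1 := by omega
    have hw0 : w ≠ [] := by
      intro h
      rw [h] at hwlen
      simp at hwlen
    obtain ⟨w', b, rfl⟩ : ∃ w' b, w = w' ++ [b] :=
      ⟨w.dropLast, w.getLast hw0, (List.dropLast_append_getLast hw0).symm⟩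
    have hmlen : w'.length + 1 = N + 1 := by simpa using hwlen
    have hpre' : IsPrenecklace q w' := by
      obtain ⟨v, hv1, hv2, hv3⟩ := hpre
      exact ⟨v, (List.prefix_append w' [b]).trans hv1, hv2, hv3⟩
    by_cases hw'0 : w' = []
    · subst hw'0
      have hp1 : IsLynLen q ([] ++ [b]) 1 := by
        refine ⟨⟨by simp, ?_⟩, by simp, ?_⟩
        · intro r hr0 hrlen
          simp at hrlen
          omega
        · intro p' h1 h2
          simp at h2
          omega
      have hpe : p = 1 := lynlen_unique hp hp1
      subst hpe
      have hieq : i = 0 := by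
        simp at hi
        omega
      subst hieq
      simp
    obtain ⟨p', hp'⟩ := exists_lynlen hw'0
    have hper' : ∀ j < w'.length, w'.getD j d = (w'.take p').getD (j % p') d :=
      fun j hj => ih w' (by omega) hpre' p' hp' j hj
    have hu : IsLyndon q (w'.take p') := hp'.1
    have hup : (w'.take p').length = p' := by
      rw [List.length_take]
      exact Nat.min_eq_left hp'.2.1
    have hperu : ∀ j < w'.length, w'.getD j d = (w'.take p').getD (j % (w'.take p').length) d := by
      intro j hj
      rw [hup]
      exact hper' j hj
    have hpm : (w'.take p').length ≤ w'.length := by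
      rw [hup]
      exact hp'.2.1
    rcases lt_trichotomy b ((w'.take p').getD (w'.length % (w'.take p').length) d) with hc | hc | hc
    · exact absurd hpre (not_pre d hu hpm hperu hc)
    · have hperw : ∀ j < (w' ++ [b]).length,
          (w' ++ [b]).getD j d = (w'.take p').getD (j % (w'.take p').length) d := by
        intro j hjlen
        rw [List.length_append, List.length_singleton] at hjlen
        rcases Nat.lt_or_ge j w'.length with h | h
        · rw [List.getD_append _ _ _ _ h]
          exact hperu j h
        · have hje : j = w'.length := by omega
          subst hje
          rw [List.getD_append_right _ _ _ _ le_rfl, Nat.sub_self]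
          simpa using hc
      have hLyn2 : IsLynLen q (w' ++ [b]) (w'.take p').length :=
        isLynLen_of_periodic d hu
          (by rw [List.length_append, List.length_singleton]; omega) hperw
      have hpp : p = (w'.take p').length := lynlen_unique hp hLyn2
      rw [hpp]
      have htake2 : (w' ++ [b]).take (w'.take p').length = w'.take p' := by
        rw [List.take_append_of_le_length hpm, hup]
      rw [htake2]
      exact hperw i hi
    · have hLyn : IsLyndon q (w' ++ [b]) := lyndon_ext d hu hpm hperu hc
      have hLL : IsLynLen q (w' ++ [b]) ((w' ++ [b]).length) := by
        refine ⟨by rw [List.take_length]; exact hLyn, le_rfl, ?_⟩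
        intro p'' h1 h2
        omega
      have hpp : p = (w' ++ [b]).length := lynlen_unique hp hLL
      rw [hpp, List.take_length, Nat.mod_eq_of_lt hi]

end PreNeck

/-- Fundamental lemma of necklace generation (Cattell–Ruskey–Sawada–Serra–Miers):
if `w` is a prenecklace of length `n-1` and `p = |lyn(w)|`, then `w·b` is a
prenecklace iff `w_{n-p} ≤ b`; moreover `|lyn(w·b)| = p` when `b = w_{n-p}`
and `|lyn(w·b)| = n` when `b > w_{n-p}`. -/
theorem prenecklace_extension (q n : ℕ) (hq : 0 < q) (hn : 2 ≤ n)
    (w : List (Fin q)) (hw : w.length = n - 1) (hpre : IsPrenecklace q w)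
    (p : ℕ) (hp : IsLynLen q w p) (b : Fin q) :
    (IsPrenecklace q (w ++ [b]) ↔ w.getD (n - p - 1) ⟨0, hq⟩ ≤ b) ∧
      (b = w.getD (n - p - 1) ⟨0, hq⟩ → IsLynLen q (w ++ [b]) p) ∧
      (w.getD (n - p - 1) ⟨0, hq⟩ < b → IsLynLen q (w ++ [b]) n) := by
  set d : Fin q := ⟨0, hq⟩ with hd
  have hm1 : 1 ≤ w.length := by omega
  have hp0 : 0 < p := by
    rcases Nat.eq_zero_or_pos p with h | h
    · exfalso
      apply hp.1.1
      rw [h, List.take_zero]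
    · exact h
  have hpm : p ≤ w.length := hp.2.1
  have hu : IsLyndon q (w.take p) := hp.1
  have hup : (w.take p).length = p := by
    rw [List.length_take]
    exact Nat.min_eq_left hpm
  have hper0 := PreNeck.pre_periodic d w.length w le_rfl hpre p hp
  have hperu : ∀ i < w.length, w.getD i d = (w.take p).getD (i % (w.take p).length) d := by
    intro i hi
    rw [hup]
    exact hper0 i hi
  have hpm' : (w.take p).length ≤ w.length := by rw [hup]; exact hpm
  have hidx : n - p - 1 = w.length - p := by omega
  have hc : w.getD (n - p - 1) d = (w.take p).getD (w.length % (w.take p).length) d := by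
    rw [hidx, hper0 (w.length - p) (by omega), hup]
    congr 1
    exact (Nat.mod_eq_sub_mod hpm).symm
  have hmain1 : IsPrenecklace q (w ++ [b]) → w.getD (n - p - 1) d ≤ b := by
    intro hPre
    by_contra hlt
    push_neg at hlt
    rw [hc] at hlt
    exact PreNeck.not_pre d hu hpm' hperu hlt hPre
  have hmain3 : w.getD (n - p - 1) d < b → IsLynLen q (w ++ [b]) n := by
    intro hlt
    rw [hc] at hlt
    have hLyn := PreNeck.lyndon_ext d hu hpm' hperu hlt
    have hlen : (w ++ [b]).length = n := by
      rw [List.length_append, List.length_singleton]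
      omega
    refine ⟨?_, by omega, ?_⟩
    · rw [← hlen, List.take_length]
      exact hLyn
    · intro p'' h1 h2
      omega
  have hperw : b = w.getD (n - p - 1) d → ∀ i < (w ++ [b]).length,
      (w ++ [b]).getD i d = (w.take p).getD (i % (w.take p).length) d := by
    intro hbe i hilen
    rw [List.length_append, List.length_singleton] at hilen
    rcases Nat.lt_or_ge i w.length with h | h
    · rw [List.getD_append _ _ _ _ h]
      exact hperu i h
    · have hie : i = w.length := by omega
      subst hie
      rw [List.getD_append_right _ _ _ _ le_rfl, Nat.sub_self]
      show b = _
      rw [hbe, hc]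
  have hmain2 : b = w.getD (n - p - 1) d → IsLynLen q (w ++ [b]) p := by
    intro hbe
    have h1 := PreNeck.isLynLen_of_periodic d hu
      (by rw [List.length_append, List.length_singleton]; omega) (hperw hbe)
    rwa [hup] at h1
  have hmain4 : w.getD (n - p - 1) d ≤ b → IsPrenecklace q (w ++ [b]) := by
    intro hle
    rcases lt_or_eq_of_le hle with hlt | heq
    · have hlt' := hlt
      rw [hc] at hlt'
      have hLyn := PreNeck.lyndon_ext d hu hpm' hperu hlt'
      refine ⟨w ++ [b], List.prefix_refl _, by simp, ?_⟩
      intro r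
      rw [← List.rotate_mod]
      have hL0 : 0 < (w ++ [b]).length := by
        rw [List.length_append, List.length_singleton]
        omega
      rcases Nat.eq_zero_or_pos (r % (w ++ [b]).length) with h0 | h0
      · rw [h0, List.rotate_zero]
        exact PreNeck.lex_irrefl _
      · exact PreNeck.lex_asymm (hLyn.2 _ h0 (Nat.mod_lt _ hL0))
    · have hK1 : 0 < w.length + 1 := by omega
      have hvlen : (List.flatten (List.replicate (w.length + 1) (w.take p))).length
          = (w.length + 1) * p := by
        rw [PreNeck.pow_length, hup]
      have hKp : w.length + 1 ≤ (w.length + 1) * p := Nat.le_mul_of_pos_right _ hp0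
      have hvper : ∀ i < (List.flatten (List.replicate (w.length + 1) (w.take p))).length,
          (List.flatten (List.replicate (w.length + 1) (w.take p))).getD i d
            = (w.take p).getD (i % (w.take p).length) d := by
        intro i hi
        rw [hvlen] at hi
        exact PreNeck.pow_getD d (w.take p) hu.1 (w.length + 1)
          (show i < (w.length + 1) * (w.take p).length by rw [hup]; exact hi)
      have htake : (List.flatten (List.replicate (w.length + 1) (w.take p))).take
          (w.length + 1) = w ++ [b] := by
        apply PreNeck.ext_getD d
        · rw [List.length_take, hvlen, List.length_append, List.length_singleton]
          omega
        · intro i hi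
          rw [List.length_take, hvlen] at hi
          have hi' : i < w.length + 1 := by omega
          rw [PreNeck.getD_take d hi' (by omega), hvper i (by omega),
            ← hperw heq.symm i
              (by rw [List.length_append, List.length_singleton]; omega)]
      refine ⟨List.flatten (List.replicate (w.length + 1) (w.take p)),
        ⟨(List.flatten (List.replicate (w.length + 1) (w.take p))).drop (w.length + 1),
          by rw [← htake, List.take_append_drop]⟩, ?_, ?_⟩
      · apply List.length_pos_iff.mp
        rw [hvlen]
        exact Nat.mul_pos hK1 hp0
      · apply PreNeck.min_rotations d hu
        · rw [hvlen]
          exact Nat.mul_pos hK1 hp0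
        · rw [hvlen, hup]
          exact dvd_mul_left p (w.length + 1)
        · exact hvper
  exact ⟨⟨hmain1, hmain4⟩, hmain2, hmain3⟩
end

section
/- If two cyclic words w, v of length n share a common cyclic subword of length m (1 ≤ m ≤ n), then the multiset of cyclic subwords of w and the multiset of cyclic subwords of v (each of total size n², counting all lengths 1..n and all n starting positions) have intersection of size at least m(m+1)/2; hence the overlap distance satisfies O(w,v) ≤ 1 − m(m+1)/(2n²). -/
/-- The multiset of all `n²` cyclic subwords of a cyclic word `w` of length
`n`: one subword of each length `1 ≤ ℓ ≤ n` starting at each of the `n`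
positions, with multiplicity. -/
def cycSubwords (n q : ℕ) (w : ZMod n → Fin q) : Multiset (List (Fin q)) :=
  ((Finset.range n) ×ˢ Finset.Icc 1 n).val.map
    fun x => (List.range x.2).map fun j => w (((x.1 + j : ℕ) : ZMod n))

/-- The overlap distance between cyclic words `u, v` of length `n`:
`O(u,v) = 1 − |S(u) ∩ S(v)| / n²` where `S(w)` is the multiset of all cyclic
subwords of `w` and the intersection takes minimum multiplicities. -/
def odist (n q : ℕ) (u v : ZMod n → Fin q) : ℚ :=
  1 - (Multiset.card (cycSubwords n q u ∩ cycSubwords n q v) : ℚ) / (n ^ 2 : ℚ)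

lemma slice_le (n q m : ℕ) (hm : 1 ≤ m) (hmn : m ≤ n) (w : ZMod n → Fin q)
    (a : List (Fin q)) (hlen : a.length = m) (ha : a ∈ cycSubwords n q w) :
    (((Finset.range m).sigma fun t => Finset.range (m - t)).val.map
      (fun p => (a.drop p.1).take (p.2 + 1))) ≤ cycSubwords n q w := by
  have hn : 0 < n := hm.trans hmn
  obtain ⟨⟨i, ℓ⟩, hx, ha'⟩ := Multiset.mem_map.1 ha
  subst ha'
  simp only [List.length_map, List.length_range] at hlen
  subst hlen
  set B := ((Finset.range ℓ).sigma fun t => Finset.range (ℓ - t)) with hB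
  set F := (fun x : ℕ × ℕ => (List.range x.2).map fun j => w (((x.1 + j : ℕ) : ZMod n))) with hF
  set g := (fun p : (_ : ℕ) × ℕ => ((i + p.1) % n, p.2 + 1)) with hg
  have key : ∀ p ∈ B.val,
      (((List.range ℓ).map fun j => w (((i + j : ℕ) : ZMod n))).drop p.1).take (p.2 + 1)
        = F (g p) := by
    rintro ⟨t, s⟩ hp
    rw [Finset.mem_val, Finset.mem_sigma, Finset.mem_range, Finset.mem_range] at hp
    dsimp only at hp
    obtain ⟨ht, hs⟩ := hp
    apply List.ext_getElem
    · simp [hF, hg]; omega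
    · intro k h1 h2
      simp only [List.getElem_take, List.getElem_drop, List.getElem_map,
        List.getElem_range, hF, hg]
      congr 1
      push_cast [ZMod.natCast_mod]
      ring
  calc B.val.map _ = (B.val.map g).map F := by
        rw [Multiset.map_map]; exact Multiset.map_congr rfl key
    _ ≤ cycSubwords n q w := by
        apply Multiset.map_le_map
        rw [Multiset.le_iff_subset]
        · intro x hx'
          obtain ⟨⟨t, s⟩, hp, rfl⟩ := Multiset.mem_map.1 hx'
          rw [Finset.mem_val, Finset.mem_sigma, Finset.mem_range, Finset.mem_range] at hp
          dsimp only at hp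
          simp only [hg, Finset.mem_val, Finset.mem_product, Finset.mem_range,
            Finset.mem_Icc]
          exact ⟨Nat.mod_lt _ hn, Nat.le_add_left _ _, by omega⟩
        · refine Multiset.Nodup.map_on ?_ B.nodup
          rintro ⟨t, s⟩ hp ⟨t', s'⟩ hp' hgp
          rw [Finset.mem_val, Finset.mem_sigma, Finset.mem_range, Finset.mem_range] at hp hp'
          dsimp only at hp hp'
          simp only [hg, Prod.mk.injEq] at hgp
          obtain ⟨h1, h2⟩ := hgp
          obtain rfl : t = t' := by
            have := (Nat.ModEq.add_left_cancel' i h1 : t ≡ t' [MOD n])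
            unfold Nat.ModEq at this
            rw [Nat.mod_eq_of_lt (by omega), Nat.mod_eq_of_lt (by omega)] at this
            exact this
          obtain rfl : s = s' := by omega
          rfl

/-- If two cyclic words `w, v` of length `n` share a common cyclic subword of
length `m` (`1 ≤ m ≤ n`), then their multisets of cyclic subwords intersect in
at least `m(m+1)/2` elements, hence `O(w,v) ≤ 1 − m(m+1)/(2n²)`. -/
theorem common_subword_overlap_bound (n q m : ℕ) (hm : 1 ≤ m) (hmn : m ≤ n)
    (w v : ZMod n → Fin q)
    (h : ∃ a : List (Fin q), a.length = m ∧
        a ∈ cycSubwords n q w ∧ a ∈ cycSubwords n q v) :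
    m * (m + 1) ≤ 2 * Multiset.card (cycSubwords n q w ∩ cycSubwords n q v) ∧
      odist n q w v ≤ 1 - (m * (m + 1) : ℚ) / (2 * n ^ 2) := by
  obtain ⟨a, hlen, haw, hav⟩ := h
  have hT : (((Finset.range m).sigma fun t => Finset.range (m - t)).val.map
      (fun p => (a.drop p.1).take (p.2 + 1))) ≤ cycSubwords n q w ∩ cycSubwords n q v :=
    le_inf (slice_le n q m hm hmn w a hlen haw) (slice_le n q m hm hmn v a hlen hav)
  have hcard := Multiset.card_le_card hT
  have hcardT : Multiset.card ((((Finset.range m).sigma fun t => Finset.range (m - t)).val.map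
      (fun p => (a.drop p.1).take (p.2 + 1)))) * 2 = m * (m + 1) := by
    rw [Multiset.card_map, ← Finset.card_def, Finset.card_sigma]
    simp only [Finset.card_range]
    have h1 : ∑ x ∈ Finset.range m, (m - x) = ∑ x ∈ Finset.range m, (x + 1) := by
      rw [← Finset.sum_range_reflect]
      exact Finset.sum_congr rfl fun j hj => by
        rw [Finset.mem_range] at hj; omega
    rw [h1, Finset.sum_add_distrib, Finset.sum_const, Finset.card_range, smul_eq_mul,
      mul_one, Nat.add_mul, Finset.sum_range_id_mul_two]
    cases m with
    | zero => rfl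
    | succ k => simp only [Nat.succ_sub_one]; ring
  have key : m * (m + 1) ≤ 2 * Multiset.card (cycSubwords n q w ∩ cycSubwords n q v) := by
    omega
  refine ⟨key, ?_⟩
  unfold odist
  have hn : (0:ℚ) < (n:ℚ) ^ 2 := by
    have : 0 < n := hm.trans hmn
    positivity
  have hkey : ((m : ℚ) * (m + 1)) ≤ 2 * (Multiset.card (cycSubwords n q w ∩ cycSubwords n q v) : ℚ) := by
    exact_mod_cast key
  have : (m * (m + 1) : ℚ) / (2 * n ^ 2)
      ≤ (Multiset.card (cycSubwords n q w ∩ cycSubwords n q v) : ℚ) / (n ^ 2 : ℚ) := by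
    rw [div_le_div_iff₀ (by positivity) hn]
    nlinarith
  linarith
end
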